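/- arXiv:2105.02537 — 10 statements merged into one kernel-verified Lean document; each statement's English description precedes it below -/
import Mathlib

section
/- Every weak brace is an inverse semi-brace; that is, in a weak brace S, the identity -a + a∘b = a∘(a⁻ + b) holds for all a, b ∈ S. -/
/-- A weak (left) brace: `(S,+)` and `(S,∘)` are inverse semigroups (with designated
inverse maps `neg` and `inv`), satisfying `a∘(b+c) = a∘b - a + a∘c` and `a∘a⁻ = -a + a`. -/
structure WeakBrace (S : Type*) where
  add : S → S → S
  mul : S → S → S
  neg : S → S
  inv : S → S
  add_assoc : ∀ a b c : S, add (add a b) c = add a (add b c)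
  mul_assoc : ∀ a b c : S, mul (mul a b) c = mul a (mul b c)
  add_neg_add : ∀ a : S, add (add a (neg a)) a = a
  neg_add_neg : ∀ a : S, add (add (neg a) a) (neg a) = neg a
  neg_unique : ∀ a x : S, add (add a x) a = a → add (add x a) x = x → x = neg a
  mul_inv_mul : ∀ a : S, mul (mul a (inv a)) a = a
  inv_mul_inv : ∀ a : S, mul (mul (inv a) a) (inv a) = inv a
  inv_unique : ∀ a x : S, mul (mul a x) a = a → mul (mul x a) x = x → x = inv a
  distrib : ∀ a b c : S, mul a (add b c) = add (add (mul a b) (neg a)) (mul a c)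
  mul_inv_eq : ∀ a : S, mul a (inv a) = add (neg a) a

theorem weakBrace_is_inverse_semibrace {S : Type*} (W : WeakBrace S) :
    ∀ a b : S, W.add (W.neg a) (W.mul a b) = W.mul a (W.add (W.inv a) b) := by
  intro a b
  rw [W.distrib, W.mul_inv_eq, W.neg_add_neg]
end

section
/- In a weak brace S, the sets of idempotents E(S,+) and E(S,∘) coincide. -/
theorem weakBrace_idempotents_coincide {S : Type*} (W : WeakBrace S) :
    ∀ a : S, W.add a a = a ↔ W.mul a a = a := by
  intro a
  constructor
  · intro h
    have hneg : a = W.neg a := W.neg_unique a a (by rw [h, h]) (by rw [h, h])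
    have h1 : W.mul a (W.inv a) = a := by rw [W.mul_inv_eq, ← hneg, h]
    calc W.mul a a = W.mul (W.mul a (W.inv a)) (W.mul a (W.inv a)) := by rw [h1]
      _ = W.mul a (W.mul (W.mul (W.inv a) a) (W.inv a)) := by
            rw [W.mul_assoc, W.mul_assoc]
      _ = W.mul a (W.inv a) := by rw [W.inv_mul_inv]
      _ = a := h1
  · intro h
    have hinv : a = W.inv a := W.inv_unique a a (by rw [h, h]) (by rw [h, h])
    have h2 : W.add (W.neg a) a = a := by rw [← W.mul_inv_eq, ← hinv, h]
    calc W.add a a = W.add (W.add (W.neg a) a) (W.add (W.neg a) a) := by rw [h2]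
      _ = W.add (W.neg a) (W.add (W.add a (W.neg a)) a) := by
            rw [W.add_assoc, W.add_assoc]
      _ = W.add (W.neg a) a := by rw [W.add_neg_add]
      _ = a := h2
end

section
/- In a weak brace S, (S,+) is a monoid with identity 0 if and only if (S,∘) is a monoid with the same identity 0. -/
namespace WeakBraceAux

variable {S : Type*} (W : WeakBrace S)

lemma neg_neg (a : S) : W.neg (W.neg a) = a :=
  (W.neg_unique (W.neg a) a (W.neg_add_neg a) (W.add_neg_add a)).symm

lemma inv_inv (a : S) : W.inv (W.inv a) = a :=
  (W.inv_unique (W.inv a) a (W.inv_mul_inv a) (W.mul_inv_mul a)).symm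

section Forward
variable {z : S} (h : ∀ a : S, W.add z a = a ∧ W.add a z = a)
include h

lemma mul_z (a : S) : W.mul a z = a := by
  set t := W.mul a z with ht
  -- E4 : t = (t + -a) + t
  have E4 : W.add (W.add t (W.neg a)) t = t := by
    have := W.distrib a z z
    rw [(h z).1] at this
    exact this.symm
  -- E1 : -a + a = -a + t
  have E1 : W.add (W.neg a) a = W.add (W.neg a) t := by
    have := W.distrib a (W.inv a) z
    rw [(h (W.inv a)).2, W.mul_inv_eq, W.neg_add_neg] at this
    exact this
  have cond2 : W.add (W.add (W.neg a) t) (W.neg a) = W.neg a := by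
    rw [← E1, W.neg_add_neg]
  have hneg : W.neg a = W.neg t := W.neg_unique t (W.neg a) E4 cond2
  calc t = W.neg (W.neg t) := (neg_neg W t).symm
    _ = W.neg (W.neg a) := by rw [hneg]
    _ = a := neg_neg W a

lemma z_mul (a : S) : W.mul z a = a := by
  have cond1 : W.mul (W.mul (W.mul z a) (W.inv a)) (W.mul z a) = W.mul z a := by
    rw [W.mul_assoc, W.mul_assoc, ← W.mul_assoc (W.inv a) z a, mul_z W h,
      ← W.mul_assoc a (W.inv a) a, W.mul_inv_mul]
  have cond2 : W.mul (W.mul (W.inv a) (W.mul z a)) (W.inv a) = W.inv a := by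
    rw [← W.mul_assoc (W.inv a) z a, mul_z W h, W.inv_mul_inv]
  have hinv : W.inv a = W.inv (W.mul z a) := W.inv_unique (W.mul z a) (W.inv a) cond1 cond2
  calc W.mul z a = W.inv (W.inv (W.mul z a)) := (inv_inv W _).symm
    _ = W.inv (W.inv a) := by rw [hinv]
    _ = a := inv_inv W a

end Forward

section Backward
variable {z : S} (h : ∀ a : S, W.mul z a = a ∧ W.mul a z = a)
include h

lemma z_add_z : W.add z z = z := by
  have azz : W.mul z (W.add z z) = z := by
    rw [W.distrib, (h z).2, W.add_neg_add]
  rw [(h (W.add z z)).1] at azz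
  exact azz

lemma neg_z : W.neg z = z :=
  Eq.symm <| W.neg_unique z z (by rw [z_add_z W h, z_add_z W h]) (by rw [z_add_z W h, z_add_z W h])

/-- `(b + z) + c = b + c`. -/
lemma delz (b c : S) : W.add (W.add b z) c = W.add b c := by
  have := W.distrib z b c
  rw [(h b).1, (h c).1, (h (W.add b c)).1, neg_z W h] at this
  exact this.symm

lemma add_z (b : S) : W.add b z = b := by
  have cond1 : W.add (W.add (W.add b z) (W.neg b)) (W.add b z) = W.add b z := by
    rw [delz W h, ← W.add_assoc, W.add_assoc (W.add b (W.neg b)) b z, ← W.add_assoc,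
      W.add_neg_add]
  have cond2 : W.add (W.add (W.neg b) (W.add b z)) (W.neg b) = W.neg b := by
    rw [← W.add_assoc, delz W h, W.neg_add_neg]
  have hneg : W.neg b = W.neg (W.add b z) := W.neg_unique (W.add b z) (W.neg b) cond1 cond2
  calc W.add b z = W.neg (W.neg (W.add b z)) := (neg_neg W _).symm
    _ = W.neg (W.neg b) := by rw [hneg]
    _ = b := neg_neg W b

lemma z_add (a : S) : W.add z a = a := by
  have cond1 : W.add (W.add (W.add z a) (W.neg a)) (W.add z a) = W.add z a := by
    rw [W.add_assoc z a (W.neg a), ← W.add_assoc _ z a, add_z W h,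
      W.add_assoc z (W.add a (W.neg a)) a, W.add_neg_add]
  have cond2 : W.add (W.add (W.neg a) (W.add z a)) (W.neg a) = W.neg a := by
    rw [← W.add_assoc, add_z W h, W.neg_add_neg]
  have hneg : W.neg a = W.neg (W.add z a) := W.neg_unique (W.add z a) (W.neg a) cond1 cond2
  calc W.add z a = W.neg (W.neg (W.add z a)) := (neg_neg W _).symm
    _ = W.neg (W.neg a) := by rw [hneg]
    _ = a := neg_neg W a

end Backward

end WeakBraceAux

theorem weakBrace_add_monoid_iff_mul_monoid {S : Type*} (W : WeakBrace S) (z : S) :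
    (∀ a : S, W.add z a = a ∧ W.add a z = a) ↔ (∀ a : S, W.mul z a = a ∧ W.mul a z = a) := by
  constructor
  · intro h a
    exact ⟨WeakBraceAux.z_mul W h a, WeakBraceAux.mul_z W h a⟩
  · intro h a
    exact ⟨WeakBraceAux.z_add W h a, WeakBraceAux.add_z W h a⟩
end

section
/- In a weak brace S, for all a, b ∈ S it holds that a∘(-b) = a - a∘b + a. -/
namespace WBAux

variable {S : Type*} (W : WeakBrace S)

local infixl:65 " ⊹ " => W.add
local infixl:70 " ⊚ " => W.mul
local prefix:max "∼" => W.neg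

/-- chain form of idempotency -/
lemma idemc {e : S} (he : e ⊹ e = e) (x : S) : e ⊹ (e ⊹ x) = e ⊹ x := by
  rw [← W.add_assoc, he]

/-- a + (-a + (a + x)) = a + x -/
lemma anax (a x : S) : a ⊹ (∼a ⊹ (a ⊹ x)) = a ⊹ x := by
  rw [← W.add_assoc, ← W.add_assoc, W.add_neg_add]

/-- -a + (a + (-a + x)) = -a + x -/
lemma nanx (a x : S) : ∼a ⊹ (a ⊹ (∼a ⊹ x)) = ∼a ⊹ x := by
  rw [← W.add_assoc, ← W.add_assoc, W.neg_add_neg]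

lemma neg_idem {e : S} (he : e ⊹ e = e) : ∼e = e :=
  (W.neg_unique e e (by rw [he, he]) (by rw [he, he])).symm

lemma sub_self_idem (a : S) : (a ⊹ ∼a) ⊹ (a ⊹ ∼a) = a ⊹ ∼a := by
  rw [← W.add_assoc, W.add_neg_add]

lemma neg_add_self_idem (a : S) : (∼a ⊹ a) ⊹ (∼a ⊹ a) = ∼a ⊹ a := by
  rw [← W.add_assoc, W.neg_add_neg]

lemma idem_add_idem {e f : S} (he : e ⊹ e = e) (hf : f ⊹ f = f) :
    (e ⊹ f) ⊹ (e ⊹ f) = e ⊹ f := by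
  set g := ∼(e ⊹ f) with hgdef
  have hg1 : e ⊹ (f ⊹ (g ⊹ (e ⊹ f))) = e ⊹ f := by
    simpa only [W.add_assoc] using W.add_neg_add (e ⊹ f)
  have hg2 : g ⊹ (e ⊹ (f ⊹ g)) = g := by
    simpa only [W.add_assoc] using W.neg_add_neg (e ⊹ f)
  have hg2c : ∀ x, g ⊹ (e ⊹ (f ⊹ (g ⊹ x))) = g ⊹ x := fun x => by
    simpa only [W.add_assoc] using congrArg (· ⊹ x) hg2
  have hA : (f ⊹ g) ⊹ e = g := by
    refine W.neg_unique (e ⊹ f) ((f ⊹ g) ⊹ e) ?_ ?_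
    · simp only [W.add_assoc, idemc W he, idemc W hf]
      exact hg1
    · simp only [W.add_assoc, idemc W he, idemc W hf, hg2c]
  have hA' : f ⊹ (g ⊹ e) = g := by simpa only [W.add_assoc] using hA
  have hB : g ⊹ g = g := by
    conv_lhs => rw [← hA']
    simp only [W.add_assoc, hg2c]
    exact hA'
  have hC : e ⊹ f = g :=
    (W.neg_unique g (e ⊹ f) (by simpa only [W.add_assoc] using W.neg_add_neg (e ⊹ f))
      (by simpa only [W.add_assoc] using W.add_neg_add (e ⊹ f))).trans (neg_idem W hB)
  rw [hC]; exact hB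

lemma idem_comm {e f : S} (he : e ⊹ e = e) (hf : f ⊹ f = f) :
    e ⊹ f = f ⊹ e := by
  have hs := idem_add_idem W he hf
  have ht := idem_add_idem W hf he
  have hs' : e ⊹ (f ⊹ (e ⊹ f)) = e ⊹ f := by simpa only [W.add_assoc] using hs
  have ht' : f ⊹ (e ⊹ (f ⊹ e)) = f ⊹ e := by simpa only [W.add_assoc] using ht
  have h1 : f ⊹ e = ∼(e ⊹ f) := by
    refine W.neg_unique (e ⊹ f) (f ⊹ e) ?_ ?_
    · simp only [W.add_assoc, idemc W he, idemc W hf]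
      exact hs'
    · simp only [W.add_assoc, idemc W he, idemc W hf]
      exact ht'
  rw [h1, neg_idem W hs]

lemma inv_inv (a : S) : W.inv (W.inv a) = a :=
  (W.inv_unique (W.inv a) a (W.inv_mul_inv a) (W.mul_inv_mul a)).symm

lemma mul_z (a : S) : a ⊚ (W.inv a ⊚ a) = a := by
  rw [← W.mul_assoc, W.mul_inv_mul]

lemma z_idem (a : S) : (W.inv a ⊚ a) ⊹ (W.inv a ⊚ a) = W.inv a ⊚ a := by
  have h : W.inv a ⊚ a = ∼(W.inv a) ⊹ W.inv a := by
    have := W.mul_inv_eq (W.inv a)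
    rwa [inv_inv W a] at this
  rw [h]; exact neg_add_self_idem W (W.inv a)

end WBAux

namespace WBAux

variable {S : Type*} (W : WeakBrace S)

local infixl:65 " ⊹ " => W.add
local infixl:70 " ⊚ " => W.mul
local prefix:max "∼" => W.neg

lemma main (a b : S) :
    a ⊚ ∼b = (a ⊹ ∼(a ⊚ b)) ⊹ a := by
  have hz : a ⊚ (W.inv a ⊚ a) = a := mul_z W a
  have hzi := z_idem W a
  have hw : a ⊚ (b ⊹ ∼b) = (a ⊚ b) ⊹ (∼a ⊹ (a ⊚ ∼b)) := by
    simpa only [W.add_assoc] using W.distrib a b (∼b)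
  have hw' : a ⊚ (∼b ⊹ b) = (a ⊚ ∼b) ⊹ (∼a ⊹ (a ⊚ b)) := by
    simpa only [W.add_assoc] using W.distrib a (∼b) b
  have h3 : (a ⊚ b) ⊹ (∼a ⊹ ((a ⊚ ∼b) ⊹ (∼a ⊹ (a ⊚ b)))) = a ⊚ b := by
    have h := W.distrib a (b ⊹ ∼b) b
    rw [W.add_neg_add b, hw] at h
    simpa only [W.add_assoc] using h.symm
  have h4 : (a ⊚ ∼b) ⊹ (∼a ⊹ ((a ⊚ b) ⊹ (∼a ⊹ (a ⊚ ∼b)))) = a ⊚ ∼b := by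
    have h := W.distrib a (∼b ⊹ b) (∼b)
    rw [W.neg_add_neg b, hw'] at h
    simpa only [W.add_assoc] using h.symm
  have h3c : ∀ x, (a ⊚ b) ⊹ (∼a ⊹ ((a ⊚ ∼b) ⊹ (∼a ⊹ ((a ⊚ b) ⊹ x)))) = (a ⊚ b) ⊹ x :=
    fun x => by simpa only [W.add_assoc] using congrArg (· ⊹ x) h3
  have h4c : ∀ x, (a ⊚ ∼b) ⊹ (∼a ⊹ ((a ⊚ b) ⊹ (∼a ⊹ ((a ⊚ ∼b) ⊹ x)))) = (a ⊚ ∼b) ⊹ x :=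
    fun x => by simpa only [W.add_assoc] using congrArg (· ⊹ x) h4
  have hnp : ∼(a ⊚ b) = ∼a ⊹ ((a ⊚ ∼b) ⊹ ∼a) := by
    refine (W.neg_unique (a ⊚ b) (∼a ⊹ ((a ⊚ ∼b) ⊹ ∼a)) ?_ ?_).symm
    · simpa only [W.add_assoc] using h3
    · simp only [W.add_assoc]
      rw [h4c]
  have hvv : (a ⊚ ∼b) ⊹ (∼a ⊹ (a ⊚ (b ⊹ ∼b))) = a ⊚ ∼b := by
    rw [hw]; exact h4
  have hvv' : (a ⊚ (∼b ⊹ b)) ⊹ (∼a ⊹ (a ⊚ ∼b)) = a ⊚ ∼b := by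
    rw [hw']; simpa only [W.add_assoc] using h4
  have hwf : (a ⊚ (b ⊹ ∼b)) ⊹ (∼a ⊹ a) = a ⊹ (∼a ⊹ (a ⊚ (b ⊹ ∼b))) := by
    calc (a ⊚ (b ⊹ ∼b)) ⊹ (∼a ⊹ a)
        = (a ⊚ (b ⊹ ∼b)) ⊹ (∼a ⊹ (a ⊚ (W.inv a ⊚ a))) := by rw [hz]
      _ = a ⊚ ((b ⊹ ∼b) ⊹ (W.inv a ⊚ a)) := by
          simpa only [W.add_assoc] using (W.distrib a (b ⊹ ∼b) (W.inv a ⊚ a)).symm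
      _ = a ⊚ ((W.inv a ⊚ a) ⊹ (b ⊹ ∼b)) := by
          rw [idem_comm W (sub_self_idem W b) hzi]
      _ = ((a ⊚ (W.inv a ⊚ a)) ⊹ ∼a) ⊹ (a ⊚ (b ⊹ ∼b)) := W.distrib a (W.inv a ⊚ a) (b ⊹ ∼b)
      _ = a ⊹ (∼a ⊹ (a ⊚ (b ⊹ ∼b))) := by rw [hz, W.add_assoc]
  have hvf : (a ⊚ ∼b) ⊹ (∼a ⊹ a) = a ⊚ ∼b := by
    calc (a ⊚ ∼b) ⊹ (∼a ⊹ a)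
        = ((a ⊚ ∼b) ⊹ (∼a ⊹ (a ⊚ (b ⊹ ∼b)))) ⊹ (∼a ⊹ a) := by rw [hvv]
      _ = (a ⊚ ∼b) ⊹ (∼a ⊹ ((a ⊚ (b ⊹ ∼b)) ⊹ (∼a ⊹ a))) := by simp only [W.add_assoc]
      _ = (a ⊚ ∼b) ⊹ (∼a ⊹ (a ⊹ (∼a ⊹ (a ⊚ (b ⊹ ∼b))))) := by rw [hwf]
      _ = (a ⊚ ∼b) ⊹ (∼a ⊹ (a ⊚ (b ⊹ ∼b))) := by rw [nanx]
      _ = a ⊚ ∼b := hvv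
  have hew : (a ⊹ ∼a) ⊹ (a ⊚ (∼b ⊹ b)) = (a ⊚ (∼b ⊹ b)) ⊹ (∼a ⊹ a) := by
    calc (a ⊹ ∼a) ⊹ (a ⊚ (∼b ⊹ b))
        = ((a ⊚ (W.inv a ⊚ a)) ⊹ ∼a) ⊹ (a ⊚ (∼b ⊹ b)) := by rw [hz]
      _ = a ⊚ ((W.inv a ⊚ a) ⊹ (∼b ⊹ b)) := (W.distrib a (W.inv a ⊚ a) (∼b ⊹ b)).symm
      _ = a ⊚ ((∼b ⊹ b) ⊹ (W.inv a ⊚ a)) := by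
          rw [idem_comm W hzi (neg_add_self_idem W b)]
      _ = ((a ⊚ (∼b ⊹ b)) ⊹ ∼a) ⊹ (a ⊚ (W.inv a ⊚ a)) := W.distrib a (∼b ⊹ b) (W.inv a ⊚ a)
      _ = (a ⊚ (∼b ⊹ b)) ⊹ (∼a ⊹ a) := by rw [hz, W.add_assoc]
  have hev : a ⊹ (∼a ⊹ (a ⊚ ∼b)) = a ⊚ ∼b := by
    calc a ⊹ (∼a ⊹ (a ⊚ ∼b))
        = (a ⊹ ∼a) ⊹ (a ⊚ ∼b) := (W.add_assoc a (∼a) (a ⊚ ∼b)).symm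
      _ = (a ⊹ ∼a) ⊹ ((a ⊚ (∼b ⊹ b)) ⊹ (∼a ⊹ (a ⊚ ∼b))) := by rw [hvv']
      _ = ((a ⊹ ∼a) ⊹ (a ⊚ (∼b ⊹ b))) ⊹ (∼a ⊹ (a ⊚ ∼b)) := (W.add_assoc _ _ _).symm
      _ = ((a ⊚ (∼b ⊹ b)) ⊹ (∼a ⊹ a)) ⊹ (∼a ⊹ (a ⊚ ∼b)) := by rw [hew]
      _ = (a ⊚ (∼b ⊹ b)) ⊹ (∼a ⊹ (a ⊹ (∼a ⊹ (a ⊚ ∼b)))) := by simp only [W.add_assoc]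
      _ = (a ⊚ (∼b ⊹ b)) ⊹ (∼a ⊹ (a ⊚ ∼b)) := by rw [nanx]
      _ = a ⊚ ∼b := hvv'
  calc a ⊚ ∼b
      = a ⊹ (∼a ⊹ (a ⊚ ∼b)) := hev.symm
    _ = a ⊹ (∼a ⊹ ((a ⊚ ∼b) ⊹ (∼a ⊹ a))) := by rw [hvf]
    _ = (a ⊹ (∼a ⊹ ((a ⊚ ∼b) ⊹ ∼a))) ⊹ a := by simp only [W.add_assoc]
    _ = (a ⊹ ∼(a ⊚ b)) ⊹ a := by rw [← hnp]

end WBAux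

theorem weakBrace_mul_neg {S : Type*} (W : WeakBrace S) :
    ∀ a b : S, W.mul a (W.neg b) = W.add (W.add a (W.neg (W.mul a b))) a :=
  fun a b => WBAux.main W a b
end

section
/- In a weak brace S, for each a ∈ S the map λ_a defined by λ_a(b) = -a + a∘b is an endomorphism of the inverse semigroup (S,+); moreover λ_{a∘b} = λ_a ∘ λ_b for all a, b ∈ S, i.e., λ is a semigroup homomorphism from (S,∘) to the endomorphism monoid of (S,+). -/
private lemma wb_assoc {S : Type*} (W : WeakBrace S) : Std.Associative W.add :=
  ⟨W.add_assoc⟩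

/-- Key identity: `-(a∘b) = (-a + a∘(-b)) + (-a)`, proven via uniqueness of
additive inverses. -/
private lemma wb_neg_mul {S : Type*} (W : WeakBrace S) (a b : S) :
    W.neg (W.mul a b) = W.add (W.add (W.neg a) (W.mul a (W.neg b))) (W.neg a) := by
  letI := wb_assoc W
  refine (W.neg_unique _ _ ?_ ?_).symm
  · calc W.add (W.add (W.mul a b)
            (W.add (W.add (W.neg a) (W.mul a (W.neg b))) (W.neg a))) (W.mul a b)
        = W.add (W.add (W.add (W.add (W.mul a b) (W.neg a)) (W.mul a (W.neg b)))
            (W.neg a)) (W.mul a b) := by ac_rfl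
      _ = W.add (W.add (W.mul a (W.add b (W.neg b))) (W.neg a)) (W.mul a b) := by
            rw [← W.distrib]
      _ = W.mul a (W.add (W.add b (W.neg b)) b) := by rw [← W.distrib]
      _ = W.mul a b := by rw [W.add_neg_add]
  · calc W.add (W.add (W.add (W.add (W.neg a) (W.mul a (W.neg b))) (W.neg a))
            (W.mul a b)) (W.add (W.add (W.neg a) (W.mul a (W.neg b))) (W.neg a))
        = W.add (W.add (W.neg a)
            (W.add (W.add (W.mul a (W.neg b)) (W.neg a)) (W.mul a b)))
            (W.add (W.add (W.neg a) (W.mul a (W.neg b))) (W.neg a)) := by ac_rfl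
      _ = W.add (W.add (W.neg a) (W.mul a (W.add (W.neg b) b)))
            (W.add (W.add (W.neg a) (W.mul a (W.neg b))) (W.neg a)) := by
            rw [← W.distrib]
      _ = W.add (W.neg a)
            (W.add (W.add (W.add (W.mul a (W.add (W.neg b) b)) (W.neg a))
              (W.mul a (W.neg b))) (W.neg a)) := by ac_rfl
      _ = W.add (W.neg a)
            (W.add (W.mul a (W.add (W.add (W.neg b) b) (W.neg b))) (W.neg a)) := by
            rw [← W.distrib]
      _ = W.add (W.neg a) (W.add (W.mul a (W.neg b)) (W.neg a)) := by
            rw [W.neg_add_neg]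
      _ = W.add (W.add (W.neg a) (W.mul a (W.neg b))) (W.neg a) := by ac_rfl

theorem weakBrace_lambda_hom {S : Type*} (W : WeakBrace S) :
    (∀ a b c : S, W.add (W.neg a) (W.mul a (W.add b c))
        = W.add (W.add (W.neg a) (W.mul a b)) (W.add (W.neg a) (W.mul a c))) ∧
    (∀ a b : S, W.add (W.neg a) (W.mul a (W.neg b)) = W.neg (W.add (W.neg a) (W.mul a b))) ∧
    (∀ a b : S, (fun c => W.add (W.neg (W.mul a b)) (W.mul (W.mul a b) c))
        = (fun c => W.add (W.neg a) (W.mul a c)) ∘ (fun c => W.add (W.neg b) (W.mul b c))) := by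
  letI := wb_assoc W
  have part1 : ∀ a b c : S, W.add (W.neg a) (W.mul a (W.add b c))
      = W.add (W.add (W.neg a) (W.mul a b)) (W.add (W.neg a) (W.mul a c)) := by
    intro a b c
    rw [W.distrib]
    ac_rfl
  refine ⟨part1, ?_, ?_⟩
  · intro a b
    refine W.neg_unique _ _ ?_ ?_
    · calc W.add (W.add (W.add (W.neg a) (W.mul a b))
              (W.add (W.neg a) (W.mul a (W.neg b)))) (W.add (W.neg a) (W.mul a b))
          = W.add (W.add (W.neg a) (W.mul a (W.add b (W.neg b))))
              (W.add (W.neg a) (W.mul a b)) := by rw [← part1]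
        _ = W.add (W.neg a) (W.mul a (W.add (W.add b (W.neg b)) b)) := by rw [← part1]
        _ = W.add (W.neg a) (W.mul a b) := by rw [W.add_neg_add]
    · calc W.add (W.add (W.add (W.neg a) (W.mul a (W.neg b)))
              (W.add (W.neg a) (W.mul a b))) (W.add (W.neg a) (W.mul a (W.neg b)))
          = W.add (W.add (W.neg a) (W.mul a (W.add (W.neg b) b)))
              (W.add (W.neg a) (W.mul a (W.neg b))) := by rw [← part1]
        _ = W.add (W.neg a) (W.mul a (W.add (W.add (W.neg b) b) (W.neg b))) := by
              rw [← part1]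
        _ = W.add (W.neg a) (W.mul a (W.neg b)) := by rw [W.neg_add_neg]
  · intro a b
    funext c
    show W.add (W.neg (W.mul a b)) (W.mul (W.mul a b) c)
        = W.add (W.neg a) (W.mul a (W.add (W.neg b) (W.mul b c)))
    rw [wb_neg_mul, W.mul_assoc, W.distrib]
    ac_rfl
end

section
/- The additive semigroup (S,+) of any weak brace S is a Clifford semigroup; in particular a - a = -a + a for every a ∈ S. -/
namespace WBP

variable {S : Type*} (W : WeakBrace S)

local infixl:65 " +ₓ " => W.add
local infixl:70 " ∙ₓ " => W.mul
local prefix:100 "∿" => W.neg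
local postfix:101 "ᵛ" => W.inv

lemma neg_neg (a : S) : ∿∿a = a :=
  (W.neg_unique (∿a) a (W.neg_add_neg a) (W.add_neg_add a)).symm

lemma inv_inv (a : S) : (aᵛ)ᵛ = a :=
  (W.inv_unique (aᵛ) a (W.inv_mul_inv a) (W.mul_inv_mul a)).symm

lemma ana (a : S) : a +ₓ (∿a +ₓ a) = a := by
  rw [← W.add_assoc, W.add_neg_add]

lemma ana' (a x : S) : a +ₓ (∿a +ₓ (a +ₓ x)) = a +ₓ x := by
  rw [show a +ₓ (∿a +ₓ (a +ₓ x)) = ((a +ₓ ∿a) +ₓ a) +ₓ x from by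
    simp only [W.add_assoc], W.add_neg_add]

lemma nan' (a x : S) : ∿a +ₓ (a +ₓ (∿a +ₓ x)) = ∿a +ₓ x := by
  rw [show ∿a +ₓ (a +ₓ (∿a +ₓ x)) = ((∿a +ₓ a) +ₓ ∿a) +ₓ x from by
    simp only [W.add_assoc], W.neg_add_neg]

lemma idemE (a : S) : (a +ₓ ∿a) +ₓ (a +ₓ ∿a) = a +ₓ ∿a := by
  rw [← W.add_assoc, W.add_neg_add]

lemma idemF (a : S) : (∿a +ₓ a) +ₓ (∿a +ₓ a) = ∿a +ₓ a := by
  rw [← W.add_assoc, W.neg_add_neg]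

lemma idem_cont {e : S} (he : e +ₓ e = e) (x : S) : e +ₓ (e +ₓ x) = e +ₓ x := by
  rw [← W.add_assoc, he]

lemma idem_neg {e : S} (he : e +ₓ e = e) : ∿e = e :=
  (W.neg_unique e e (by rw [he, he]) (by rw [he, he])).symm

lemma idem_sum (e f : S) (he : e +ₓ e = e) (hf : f +ₓ f = f) :
    (e +ₓ f) +ₓ (e +ₓ f) = e +ₓ f := by
  have h1 : ((e +ₓ f) +ₓ ((f +ₓ ∿(e +ₓ f)) +ₓ e)) +ₓ (e +ₓ f) = e +ₓ f := by
    have h := W.add_neg_add (e +ₓ f)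
    simp only [W.add_assoc] at h ⊢
    rw [idem_cont W hf, idem_cont W he]
    exact h
  have hc : ∀ x, ∿(e +ₓ f) +ₓ (e +ₓ (f +ₓ (∿(e +ₓ f) +ₓ x))) = ∿(e +ₓ f) +ₓ x := by
    intro x
    calc ∿(e +ₓ f) +ₓ (e +ₓ (f +ₓ (∿(e +ₓ f) +ₓ x)))
        = ((∿(e +ₓ f) +ₓ (e +ₓ f)) +ₓ ∿(e +ₓ f)) +ₓ x := by simp only [W.add_assoc]
      _ = ∿(e +ₓ f) +ₓ x := by rw [W.neg_add_neg]
  have h2 : (((f +ₓ ∿(e +ₓ f)) +ₓ e) +ₓ (e +ₓ f)) +ₓ ((f +ₓ ∿(e +ₓ f)) +ₓ e)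
      = (f +ₓ ∿(e +ₓ f)) +ₓ e := by
    simp only [W.add_assoc]
    rw [idem_cont W he, idem_cont W hf, hc]
  have key : (f +ₓ ∿(e +ₓ f)) +ₓ e = ∿(e +ₓ f) :=
    W.neg_unique (e +ₓ f) ((f +ₓ ∿(e +ₓ f)) +ₓ e) h1 h2
  have gg : ∿(e +ₓ f) +ₓ ∿(e +ₓ f) = ∿(e +ₓ f) := by
    conv_lhs => rw [← key]
    calc ((f +ₓ ∿(e +ₓ f)) +ₓ e) +ₓ ((f +ₓ ∿(e +ₓ f)) +ₓ e)
        = f +ₓ (((∿(e +ₓ f) +ₓ (e +ₓ f)) +ₓ ∿(e +ₓ f)) +ₓ e) := by simp only [W.add_assoc]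
      _ = f +ₓ (∿(e +ₓ f) +ₓ e) := by rw [W.neg_add_neg]
      _ = (f +ₓ ∿(e +ₓ f)) +ₓ e := by rw [W.add_assoc]
      _ = ∿(e +ₓ f) := key
  have hefg : e +ₓ f = ∿(e +ₓ f) := by
    calc e +ₓ f = ∿(∿(e +ₓ f)) := (neg_neg W _).symm
      _ = ∿(e +ₓ f) := idem_neg W gg
  rw [hefg]; exact gg

lemma idem_comm (e f : S) (he : e +ₓ e = e) (hf : f +ₓ f = f) : e +ₓ f = f +ₓ e := by
  have hef := idem_sum W e f he hf
  have hfe := idem_sum W f e hf he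
  have hnef : ∿(e +ₓ f) = e +ₓ f := idem_neg W hef
  have h1 : ((e +ₓ f) +ₓ (f +ₓ e)) +ₓ (e +ₓ f) = e +ₓ f := by
    have h := hef
    simp only [W.add_assoc] at h ⊢
    rw [idem_cont W hf, idem_cont W he]
    exact h
  have h2 : ((f +ₓ e) +ₓ (e +ₓ f)) +ₓ (f +ₓ e) = f +ₓ e := by
    have h := hfe
    simp only [W.add_assoc] at h ⊢
    rw [idem_cont W he, idem_cont W hf]
    exact h
  have h3 := W.neg_unique (e +ₓ f) (f +ₓ e) h1 h2
  rw [hnef] at h3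
  exact h3.symm

lemma neg_add (a b : S) : ∿(a +ₓ b) = ∿b +ₓ ∿a := by
  have h1 : ((a +ₓ b) +ₓ (∿b +ₓ ∿a)) +ₓ (a +ₓ b) = a +ₓ b := by
    calc ((a +ₓ b) +ₓ (∿b +ₓ ∿a)) +ₓ (a +ₓ b)
        = a +ₓ (((b +ₓ ∿b) +ₓ (∿a +ₓ a)) +ₓ b) := by simp only [W.add_assoc]
      _ = a +ₓ (((∿a +ₓ a) +ₓ (b +ₓ ∿b)) +ₓ b) := by
            rw [idem_comm W (b +ₓ ∿b) (∿a +ₓ a) (idemE W b) (idemF W a)]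
      _ = a +ₓ (∿a +ₓ (a +ₓ ((b +ₓ ∿b) +ₓ b))) := by simp only [W.add_assoc]
      _ = a +ₓ (∿a +ₓ (a +ₓ b)) := by rw [W.add_neg_add]
      _ = a +ₓ b := ana' W a b
  have h2 : ((∿b +ₓ ∿a) +ₓ (a +ₓ b)) +ₓ (∿b +ₓ ∿a) = ∿b +ₓ ∿a := by
    calc ((∿b +ₓ ∿a) +ₓ (a +ₓ b)) +ₓ (∿b +ₓ ∿a)
        = ∿b +ₓ (((∿a +ₓ a) +ₓ (b +ₓ ∿b)) +ₓ ∿a) := by simp only [W.add_assoc]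
      _ = ∿b +ₓ (((b +ₓ ∿b) +ₓ (∿a +ₓ a)) +ₓ ∿a) := by
            rw [idem_comm W (∿a +ₓ a) (b +ₓ ∿b) (idemF W a) (idemE W b)]
      _ = ∿b +ₓ (b +ₓ (∿b +ₓ ((∿a +ₓ a) +ₓ ∿a))) := by simp only [W.add_assoc]
      _ = ∿b +ₓ (b +ₓ (∿b +ₓ ∿a)) := by rw [W.neg_add_neg]
      _ = ∿b +ₓ ∿a := nan' W b (∿a)
  exact (W.neg_unique (a +ₓ b) (∿b +ₓ ∿a) h1 h2).symm

lemma neg_circ (a b : S) : ∿(a ∙ₓ b) = (∿a +ₓ (a ∙ₓ ∿b)) +ₓ ∿a := by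
  have d1 : a ∙ₓ (b +ₓ ∿b) = ((a ∙ₓ b) +ₓ ∿a) +ₓ (a ∙ₓ ∿b) := W.distrib a b (∿b)
  have d1' : a ∙ₓ (∿b +ₓ b) = ((a ∙ₓ ∿b) +ₓ ∿a) +ₓ (a ∙ₓ b) := W.distrib a (∿b) b
  have hu : ((((a ∙ₓ b) +ₓ ∿a) +ₓ (a ∙ₓ ∿b)) +ₓ ∿a) +ₓ (a ∙ₓ b) = a ∙ₓ b := by
    have d2 := W.distrib a (b +ₓ ∿b) b
    rw [W.add_neg_add b, d1] at d2
    exact d2.symm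
  have hv : ((((a ∙ₓ ∿b) +ₓ ∿a) +ₓ (a ∙ₓ b)) +ₓ ∿a) +ₓ (a ∙ₓ ∿b) = a ∙ₓ ∿b := by
    have d2 := W.distrib a (∿b +ₓ b) (∿b)
    rw [W.neg_add_neg b, d1'] at d2
    exact d2.symm
  have h1 : ((a ∙ₓ b) +ₓ ((∿a +ₓ (a ∙ₓ ∿b)) +ₓ ∿a)) +ₓ (a ∙ₓ b) = a ∙ₓ b := by
    have h := hu
    simp only [W.add_assoc] at h ⊢
    exact h
  have hvc : ∀ x, (a ∙ₓ ∿b) +ₓ (∿a +ₓ ((a ∙ₓ b) +ₓ (∿a +ₓ ((a ∙ₓ ∿b) +ₓ x))))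
      = (a ∙ₓ ∿b) +ₓ x := by
    intro x
    calc (a ∙ₓ ∿b) +ₓ (∿a +ₓ ((a ∙ₓ b) +ₓ (∿a +ₓ ((a ∙ₓ ∿b) +ₓ x))))
        = (((((a ∙ₓ ∿b) +ₓ ∿a) +ₓ (a ∙ₓ b)) +ₓ ∿a) +ₓ (a ∙ₓ ∿b)) +ₓ x := by
            simp only [W.add_assoc]
      _ = (a ∙ₓ ∿b) +ₓ x := by rw [hv]
  have h2 : (((∿a +ₓ (a ∙ₓ ∿b)) +ₓ ∿a) +ₓ (a ∙ₓ b)) +ₓ ((∿a +ₓ (a ∙ₓ ∿b)) +ₓ ∿a)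
      = (∿a +ₓ (a ∙ₓ ∿b)) +ₓ ∿a := by
    simp only [W.add_assoc]
    rw [hvc]
  exact (W.neg_unique (a ∙ₓ b) _ h1 h2).symm

lemma circ_neg (a b : S) : a ∙ₓ ∿b = (a +ₓ ∿(a ∙ₓ b)) +ₓ a := by
  have h := neg_circ W a (∿b)
  rw [neg_neg W b] at h
  calc a ∙ₓ ∿b = ∿(∿(a ∙ₓ ∿b)) := (neg_neg W _).symm
    _ = ∿((∿a +ₓ (a ∙ₓ b)) +ₓ ∿a) := by rw [h]
    _ = ∿(∿a) +ₓ (∿(a ∙ₓ b) +ₓ ∿(∿a)) := by rw [neg_add W, neg_add W]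
    _ = a +ₓ (∿(a ∙ₓ b) +ₓ a) := by rw [neg_neg W a]
    _ = (a +ₓ ∿(a ∙ₓ b)) +ₓ a := by rw [W.add_assoc]

lemma star (a : S) : a = a +ₓ ((a +ₓ ∿a) +ₓ (∿a +ₓ a)) := by
  have h2 : a ∙ₓ ∿(aᵛ) = a +ₓ a := by
    calc a ∙ₓ ∿(aᵛ) = (a +ₓ ∿(a ∙ₓ aᵛ)) +ₓ a := circ_neg W a (aᵛ)
      _ = (a +ₓ ∿(∿a +ₓ a)) +ₓ a := by rw [W.mul_inv_eq]
      _ = (a +ₓ (∿a +ₓ ∿(∿a))) +ₓ a := by rw [neg_add W]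
      _ = (a +ₓ (∿a +ₓ a)) +ₓ a := by rw [neg_neg W]
      _ = a +ₓ a := by rw [ana W a]
  have h1 : a ∙ₓ (∿(aᵛ) +ₓ aᵛ) = a := by
    have hi : aᵛ ∙ₓ a = ∿(aᵛ) +ₓ aᵛ := by
      have h := W.mul_inv_eq (aᵛ)
      rwa [inv_inv W] at h
    rw [← hi, ← W.mul_assoc]
    exact W.mul_inv_mul a
  have h3 := W.distrib a (∿(aᵛ)) (aᵛ)
  rw [h2, W.mul_inv_eq, h1] at h3
  calc a = ((a +ₓ a) +ₓ ∿a) +ₓ (∿a +ₓ a) := h3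
    _ = a +ₓ ((a +ₓ ∿a) +ₓ (∿a +ₓ a)) := by simp only [W.add_assoc]

lemma main (a : S) : a +ₓ ∿a = ∿a +ₓ a := by
  have hstar := star W a
  have hstarn := star W (∿a)
  rw [neg_neg W a] at hstarn
  have hef := idem_comm W (a +ₓ ∿a) (∿a +ₓ a) (idemE W a) (idemF W a)
  have h9 : a +ₓ ∿a = (a +ₓ ∿a) +ₓ (∿a +ₓ a) := by
    calc a +ₓ ∿a
        = a +ₓ (∿a +ₓ ((∿a +ₓ a) +ₓ (a +ₓ ∿a))) := congrArg (W.add a) hstarn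
      _ = (a +ₓ ∿a) +ₓ ((∿a +ₓ a) +ₓ (a +ₓ ∿a)) := by simp only [W.add_assoc]
      _ = (a +ₓ ∿a) +ₓ ((a +ₓ ∿a) +ₓ (∿a +ₓ a)) := by rw [← hef]
      _ = ((a +ₓ ∿a) +ₓ (a +ₓ ∿a)) +ₓ (∿a +ₓ a) := by simp only [W.add_assoc]
      _ = (a +ₓ ∿a) +ₓ (∿a +ₓ a) := by rw [idemE W a]
  have h10 : ∿a +ₓ a = (∿a +ₓ a) +ₓ (a +ₓ ∿a) := by
    calc ∿a +ₓ a
        = ∿a +ₓ (a +ₓ ((a +ₓ ∿a) +ₓ (∿a +ₓ a))) := congrArg (W.add (∿a)) hstar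
      _ = (∿a +ₓ a) +ₓ ((a +ₓ ∿a) +ₓ (∿a +ₓ a)) := by simp only [W.add_assoc]
      _ = (∿a +ₓ a) +ₓ ((∿a +ₓ a) +ₓ (a +ₓ ∿a)) := by rw [hef]
      _ = ((∿a +ₓ a) +ₓ (∿a +ₓ a)) +ₓ (a +ₓ ∿a) := by simp only [W.add_assoc]
      _ = (∿a +ₓ a) +ₓ (a +ₓ ∿a) := by rw [idemF W a]
  calc a +ₓ ∿a = (a +ₓ ∿a) +ₓ (∿a +ₓ a) := h9
    _ = (∿a +ₓ a) +ₓ (a +ₓ ∿a) := hef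
    _ = ∿a +ₓ a := h10.symm

lemma central (e a : S) (he : e +ₓ e = e) : e +ₓ a = a +ₓ e := by
  have sn : e +ₓ (a +ₓ ∿a) = ∿a +ₓ (e +ₓ a) := by
    have hx := main W (e +ₓ a)
    rw [neg_add W, idem_neg W he] at hx
    calc e +ₓ (a +ₓ ∿a)
        = e +ₓ (e +ₓ (a +ₓ ∿a)) := (idem_cont W he _).symm
      _ = e +ₓ ((a +ₓ ∿a) +ₓ e) := by rw [idem_comm W e (a +ₓ ∿a) he (idemE W a)]
      _ = (e +ₓ a) +ₓ (∿a +ₓ e) := by simp only [W.add_assoc]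
      _ = (∿a +ₓ e) +ₓ (e +ₓ a) := hx
      _ = ∿a +ₓ (e +ₓ (e +ₓ a)) := by simp only [W.add_assoc]
      _ = ∿a +ₓ (e +ₓ a) := by rw [idem_cont W he]
  have haa : a +ₓ (a +ₓ ∿a) = a := by
    rw [main W a, ana W a]
  have h : a +ₓ e = e +ₓ a := by
    calc a +ₓ e
        = (a +ₓ (a +ₓ ∿a)) +ₓ e := by rw [haa]
      _ = a +ₓ ((a +ₓ ∿a) +ₓ e) := by simp only [W.add_assoc]
      _ = a +ₓ (e +ₓ (a +ₓ ∿a)) := by rw [idem_comm W (a +ₓ ∿a) e (idemE W a) he]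
      _ = a +ₓ (∿a +ₓ (e +ₓ a)) := by rw [sn]
      _ = ((a +ₓ ∿a) +ₓ e) +ₓ a := by simp only [W.add_assoc]
      _ = (e +ₓ (a +ₓ ∿a)) +ₓ a := by rw [idem_comm W (a +ₓ ∿a) e (idemE W a) he]
      _ = e +ₓ ((a +ₓ ∿a) +ₓ a) := by simp only [W.add_assoc]
      _ = e +ₓ a := by rw [W.add_neg_add a]
  exact h.symm

end WBP

theorem weakBrace_add_clifford {S : Type*} (W : WeakBrace S) :
    (∀ e a : S, W.add e e = e → W.add e a = W.add a e) ∧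
    (∀ a : S, W.add a (W.neg a) = W.add (W.neg a) a) :=
  ⟨fun e a he => WBP.central W e a he, fun a => WBP.main W a⟩
end

section
/- In a weak brace S, for all a, b ∈ S: (ρ_b(a))⁻ = b⁻∘a⁻ - b⁻, where ρ_b(a) := (a⁻ + b)⁻ ∘ b. -/
structure InvSg (S : Type*) where
  op : S → S → S
  iv : S → S
  assoc : ∀ a b c : S, op (op a b) c = op a (op b c)
  h1 : ∀ a : S, op (op a (iv a)) a = a
  h2 : ∀ a : S, op (op (iv a) a) (iv a) = iv a
  h3 : ∀ a x : S, op (op a x) a = a → op (op x a) x = x → x = iv a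

namespace InvSg
variable {S : Type*} (M : InvSg S)

local infixl:70 " ⬝ " => M.op

theorem c2 {a b c : S} (h : a ⬝ b = c) : ∀ y, a ⬝ (b ⬝ y) = c ⬝ y := fun y => by
  rw [← M.assoc, h]

theorem c3 {a b c d : S} (h : a ⬝ (b ⬝ c) = d) : ∀ y, a ⬝ (b ⬝ (c ⬝ y)) = d ⬝ y := fun y => by
  have := congrArg (fun z => M.op z y) h
  simp only [M.assoc] at this
  exact this

theorem c4 {a b c d e : S} (h : a ⬝ (b ⬝ (c ⬝ d)) = e) :
    ∀ y, a ⬝ (b ⬝ (c ⬝ (d ⬝ y))) = e ⬝ y := fun y => by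
  have := congrArg (fun z => M.op z y) h
  simp only [M.assoc] at this
  exact this

theorem iv_of_idem {e : S} (he : e ⬝ e = e) : M.iv e = e :=
  (M.h3 e e (by rw [he, he]) (by rw [he, he])).symm

theorem iv_iv (a : S) : M.iv (M.iv a) = a :=
  (M.h3 (M.iv a) a (M.h2 a) (M.h1 a)).symm

theorem h1' (a : S) : a ⬝ (M.iv a ⬝ a) = a := by rw [← M.assoc, M.h1]
theorem h2' (a : S) : M.iv a ⬝ (a ⬝ M.iv a) = M.iv a := by rw [← M.assoc, M.h2]

theorem op_iv_idem (a : S) : (a ⬝ M.iv a) ⬝ (a ⬝ M.iv a) = a ⬝ M.iv a := by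
  simp only [M.assoc]
  rw [M.c3 (M.h1' a)]

theorem iv_op_idem (a : S) : (M.iv a ⬝ a) ⬝ (M.iv a ⬝ a) = M.iv a ⬝ a := by
  simp only [M.assoc]
  rw [M.c3 (M.h2' a)]

theorem idem_op_idem {e f : S} (he : e ⬝ e = e) (hf : f ⬝ f = f) :
    (e ⬝ f) ⬝ (e ⬝ f) = e ⬝ f := by
  have A0 : ((e ⬝ f) ⬝ M.iv (e ⬝ f)) ⬝ (e ⬝ f) = e ⬝ f := M.h1 _
  have B0 : (M.iv (e ⬝ f) ⬝ (e ⬝ f)) ⬝ M.iv (e ⬝ f) = M.iv (e ⬝ f) := M.h2 _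
  set x := M.iv (e ⬝ f) with hx
  have A := A0; have B := B0
  simp only [M.assoc] at A B
  -- A : e ⬝ (f ⬝ (x ⬝ (e ⬝ f))) = e ⬝ f ; B : x ⬝ (e ⬝ (f ⬝ x)) = x
  have key : (f ⬝ x) ⬝ e = x := by
    refine M.h3 (e ⬝ f) ((f ⬝ x) ⬝ e) ?_ ?_
    · simp only [M.assoc]
      rw [M.c2 hf, M.c2 he]
      simpa only [M.assoc] using A
    · simp only [M.assoc]
      rw [M.c2 he, M.c2 hf, M.c4 B]
  have key' : f ⬝ (x ⬝ e) = x := by simpa only [M.assoc] using key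
  have hxx : x ⬝ x = x := by
    conv_lhs => rw [← key]
    simp only [M.assoc]
    rw [M.c4 B, key']
  have efx : e ⬝ f = x := by
    rw [← M.iv_of_idem hxx]
    exact M.h3 x (e ⬝ f) B0 A0
  rw [efx, hxx]

theorem idem_comm {e f : S} (he : e ⬝ e = e) (hf : f ⬝ f = f) : f ⬝ e = e ⬝ f := by
  have hef := M.idem_op_idem he hf
  have hfe := M.idem_op_idem hf he
  have h : f ⬝ e = M.iv (e ⬝ f) := by
    refine M.h3 (e ⬝ f) (f ⬝ e) ?_ ?_
    · simp only [M.assoc]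
      rw [M.c2 hf, M.c2 he]
      simpa only [M.assoc] using hef
    · simp only [M.assoc]
      rw [M.c2 he, M.c2 hf]
      simpa only [M.assoc] using hfe
  rw [h, M.iv_of_idem hef]

theorem iv_op (a b : S) : M.iv (a ⬝ b) = M.iv b ⬝ M.iv a := by
  have hp := M.op_iv_idem b      -- (b⬝b')⬝(b⬝b') = b⬝b'
  have hq := M.iv_op_idem a      -- (a'⬝a)⬝(a'⬝a) = a'⬝a
  have hcomm := M.idem_comm hp hq  -- (a'⬝a)⬝(b⬝b') = (b⬝b')⬝(a'⬝a)
  symm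
  refine M.h3 (a ⬝ b) (M.iv b ⬝ M.iv a) ?_ ?_
  · simp only [M.assoc]
    -- a ⬝ (b ⬝ (b' ⬝ (a' ⬝ (a ⬝ b)))) = a ⬝ b
    rw [← M.assoc (M.iv a) a b, ← M.assoc b (M.iv b) ((M.iv a ⬝ a) ⬝ b),
      ← M.assoc (b ⬝ M.iv b) (M.iv a ⬝ a) b, ← hcomm,
      M.assoc (M.iv a ⬝ a) (b ⬝ M.iv b) b, M.h1 b,
      ← M.assoc a (M.iv a ⬝ a) b, M.h1' a]
  · simp only [M.assoc]
    -- b' ⬝ (a' ⬝ (a ⬝ (b ⬝ (b' ⬝ a')))) = b' ⬝ a'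
    rw [← M.assoc b (M.iv b) (M.iv a), ← M.assoc a ((b ⬝ M.iv b)) (M.iv a),
      ← M.assoc (M.iv a) (a ⬝ (b ⬝ M.iv b)) (M.iv a), ← M.assoc (M.iv a) a (b ⬝ M.iv b),
      hcomm, M.assoc (b ⬝ M.iv b) (M.iv a ⬝ a) (M.iv a), M.h2 a, ← M.assoc (M.iv b) (b ⬝ M.iv b) (M.iv a), M.h2' b]

end InvSg
namespace WeakBrace
variable {S : Type*} (W : WeakBrace S)

/-- The additive inverse-semigroup of a weak brace. -/
def addSg : InvSg S := ⟨W.add, W.neg, W.add_assoc, W.add_neg_add, W.neg_add_neg, W.neg_unique⟩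

/-- The multiplicative inverse-semigroup of a weak brace. -/
def mulSg : InvSg S := ⟨W.mul, W.inv, W.mul_assoc, W.mul_inv_mul, W.inv_mul_inv, W.inv_unique⟩

local infixl:65 " +ᵂ " => W.add
local infixl:70 " *ᵂ " => W.mul
local prefix:max "∼" => W.neg

theorem inv_inv (a : S) : W.inv (W.inv a) = a := W.mulSg.iv_iv a

theorem inv_mul (a b : S) : W.inv (a *ᵂ b) = W.inv b *ᵂ W.inv a := W.mulSg.iv_op a b

theorem plus_idem_mul {h : S} (hh : h +ᵂ h = h) : h *ᵂ h = h := by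
  have hn : ∼h = h := W.addSg.iv_of_idem hh
  have h1 : h *ᵂ W.inv h = h := by rw [W.mul_inv_eq, hn, hh]
  have h2 : (h *ᵂ W.inv h) *ᵂ (h *ᵂ W.inv h) = h *ᵂ W.inv h := W.mulSg.op_iv_idem h
  rw [h1] at h2
  exact h2

theorem mul_idem_plus {h : S} (hm : h *ᵂ h = h) : h +ᵂ h = h := by
  have hi : W.inv h = h := W.mulSg.iv_of_idem hm
  have key : ∼h +ᵂ h = h := by rw [← W.mul_inv_eq, hi, hm]
  calc h +ᵂ h = h +ᵂ (∼h +ᵂ h) := by rw [key]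
    _ = (h +ᵂ ∼h) +ᵂ h := (W.add_assoc ..).symm
    _ = h := W.add_neg_add h

/-- Core absorption: `-a + (-a + a) = -a`. -/
theorem absorb (a : S) : ∼a +ᵂ (∼a +ᵂ a) = ∼a := by
  have he_p : (∼a +ᵂ a) +ᵂ (∼a +ᵂ a) = ∼a +ᵂ a := by
    rw [W.add_assoc, ← W.add_assoc a ∼a a, W.add_neg_add]
  have hf_p : (a +ᵂ ∼a) +ᵂ (a +ᵂ ∼a) = a +ᵂ ∼a := by
    rw [W.add_assoc, ← W.add_assoc ∼a a ∼a, W.neg_add_neg]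
  have hne : ∼(∼a +ᵂ a) = ∼a +ᵂ a := W.addSg.iv_of_idem he_p
  have he_m : (∼a +ᵂ a) *ᵂ (∼a +ᵂ a) = ∼a +ᵂ a := W.plus_idem_mul he_p
  have hf_m : (a +ᵂ ∼a) *ᵂ (a +ᵂ ∼a) = a +ᵂ ∼a := W.plus_idem_mul hf_p
  have hea : (∼a +ᵂ a) *ᵂ a = a := by
    rw [← W.mul_inv_eq, W.mul_inv_mul]
  have hg_m : ((∼a +ᵂ a) *ᵂ (a +ᵂ ∼a)) *ᵂ ((∼a +ᵂ a) *ᵂ (a +ᵂ ∼a))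
      = (∼a +ᵂ a) *ᵂ (a +ᵂ ∼a) := W.mulSg.idem_op_idem he_m hf_m
  have hg_p : ((∼a +ᵂ a) *ᵂ (a +ᵂ ∼a)) +ᵂ ((∼a +ᵂ a) *ᵂ (a +ᵂ ∼a))
      = (∼a +ᵂ a) *ᵂ (a +ᵂ ∼a) := W.mul_idem_plus hg_m
  -- notation: e := ∼a + a, f := a + ∼a, g := e*f, w := e*∼a
  have hcomm9 : (∼a +ᵂ a) +ᵂ ((∼a +ᵂ a) *ᵂ (a +ᵂ ∼a))
      = ((∼a +ᵂ a) *ᵂ (a +ᵂ ∼a)) +ᵂ (∼a +ᵂ a) := W.addSg.idem_comm hg_p he_p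
  have hd8 : (∼a +ᵂ a) *ᵂ ((a +ᵂ ∼a) +ᵂ (a +ᵂ ∼a))
      = (((∼a +ᵂ a) *ᵂ (a +ᵂ ∼a)) +ᵂ ∼(∼a +ᵂ a)) +ᵂ ((∼a +ᵂ a) *ᵂ (a +ᵂ ∼a)) :=
    W.distrib _ _ _
  rw [hf_p, hne] at hd8
  -- hd8 : g = (g + e) + g
  have hge : ((∼a +ᵂ a) *ᵂ (a +ᵂ ∼a)) +ᵂ (∼a +ᵂ a) = (∼a +ᵂ a) *ᵂ (a +ᵂ ∼a) := by
    symm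
    calc (∼a +ᵂ a) *ᵂ (a +ᵂ ∼a)
        = (((∼a +ᵂ a) *ᵂ (a +ᵂ ∼a)) +ᵂ (∼a +ᵂ a)) +ᵂ ((∼a +ᵂ a) *ᵂ (a +ᵂ ∼a)) := hd8
      _ = ((∼a +ᵂ a) *ᵂ (a +ᵂ ∼a)) +ᵂ ((∼a +ᵂ a) +ᵂ ((∼a +ᵂ a) *ᵂ (a +ᵂ ∼a))) :=
          W.add_assoc _ _ _
      _ = ((∼a +ᵂ a) *ᵂ (a +ᵂ ∼a)) +ᵂ (((∼a +ᵂ a) *ᵂ (a +ᵂ ∼a)) +ᵂ (∼a +ᵂ a)) := by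
          rw [hcomm9]
      _ = (((∼a +ᵂ a) *ᵂ (a +ᵂ ∼a)) +ᵂ ((∼a +ᵂ a) *ᵂ (a +ᵂ ∼a))) +ᵂ (∼a +ᵂ a) :=
          (W.add_assoc _ _ _).symm
      _ = ((∼a +ᵂ a) *ᵂ (a +ᵂ ∼a)) +ᵂ (∼a +ᵂ a) := by rw [hg_p]
  have heg : (∼a +ᵂ a) +ᵂ ((∼a +ᵂ a) *ᵂ (a +ᵂ ∼a)) = (∼a +ᵂ a) *ᵂ (a +ᵂ ∼a) := by
    rw [hcomm9, hge]
  have hna : (∼a +ᵂ a) +ᵂ ∼a = ∼a := W.neg_add_neg a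
  have hw3 : (∼a +ᵂ a) +ᵂ ((∼a +ᵂ a) *ᵂ ∼a) = (∼a +ᵂ a) *ᵂ ∼a := by
    symm
    calc (∼a +ᵂ a) *ᵂ ∼a = (∼a +ᵂ a) *ᵂ ((∼a +ᵂ a) +ᵂ ∼a) := by rw [hna]
      _ = (((∼a +ᵂ a) *ᵂ (∼a +ᵂ a)) +ᵂ ∼(∼a +ᵂ a)) +ᵂ ((∼a +ᵂ a) *ᵂ ∼a) := W.distrib _ _ _
      _ = ((∼a +ᵂ a) +ᵂ (∼a +ᵂ a)) +ᵂ ((∼a +ᵂ a) *ᵂ ∼a) := by rw [he_m, hne]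
      _ = (∼a +ᵂ a) +ᵂ ((∼a +ᵂ a) *ᵂ ∼a) := by rw [he_p]
  have hfa : ∼a +ᵂ (a +ᵂ ∼a) = ∼a := by
    rw [← W.add_assoc, W.neg_add_neg]
  have hw4 : ((∼a +ᵂ a) *ᵂ ∼a) +ᵂ ((∼a +ᵂ a) *ᵂ (a +ᵂ ∼a)) = (∼a +ᵂ a) *ᵂ ∼a := by
    symm
    calc (∼a +ᵂ a) *ᵂ ∼a = (∼a +ᵂ a) *ᵂ (∼a +ᵂ (a +ᵂ ∼a)) := by rw [hfa]
      _ = (((∼a +ᵂ a) *ᵂ ∼a) +ᵂ ∼(∼a +ᵂ a)) +ᵂ ((∼a +ᵂ a) *ᵂ (a +ᵂ ∼a)) := W.distrib _ _ _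
      _ = (((∼a +ᵂ a) *ᵂ ∼a) +ᵂ (∼a +ᵂ a)) +ᵂ ((∼a +ᵂ a) *ᵂ (a +ᵂ ∼a)) := by rw [hne]
      _ = ((∼a +ᵂ a) *ᵂ ∼a) +ᵂ ((∼a +ᵂ a) +ᵂ ((∼a +ᵂ a) *ᵂ (a +ᵂ ∼a))) := W.add_assoc _ _ _
      _ = ((∼a +ᵂ a) *ᵂ ∼a) +ᵂ ((∼a +ᵂ a) *ᵂ (a +ᵂ ∼a)) := by rw [heg]
  have hw5 : (((∼a +ᵂ a) *ᵂ ∼a) +ᵂ (∼a +ᵂ a)) +ᵂ a = ∼a +ᵂ a := by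
    symm
    calc ∼a +ᵂ a = (∼a +ᵂ a) *ᵂ (∼a +ᵂ a) := he_m.symm
      _ = (((∼a +ᵂ a) *ᵂ ∼a) +ᵂ ∼(∼a +ᵂ a)) +ᵂ ((∼a +ᵂ a) *ᵂ a) := W.distrib _ _ _
      _ = (((∼a +ᵂ a) *ᵂ ∼a) +ᵂ (∼a +ᵂ a)) +ᵂ a := by rw [hne, hea]
  have hwe : ((∼a +ᵂ a) *ᵂ ∼a) +ᵂ (∼a +ᵂ a) = (∼a +ᵂ a) *ᵂ ∼a := by
    symm
    calc (∼a +ᵂ a) *ᵂ ∼a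
        = ((∼a +ᵂ a) *ᵂ ∼a) +ᵂ ((∼a +ᵂ a) *ᵂ (a +ᵂ ∼a)) := hw4.symm
      _ = ((∼a +ᵂ a) *ᵂ ∼a) +ᵂ (((∼a +ᵂ a) *ᵂ (a +ᵂ ∼a)) +ᵂ (∼a +ᵂ a)) := by rw [hge]
      _ = (((∼a +ᵂ a) *ᵂ ∼a) +ᵂ ((∼a +ᵂ a) *ᵂ (a +ᵂ ∼a))) +ᵂ (∼a +ᵂ a) :=
          (W.add_assoc _ _ _).symm
      _ = ((∼a +ᵂ a) *ᵂ ∼a) +ᵂ (∼a +ᵂ a) := by rw [hw4]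
  have hae : a +ᵂ (∼a +ᵂ a) = a := by
    rw [← W.add_assoc, W.add_neg_add]
  have haw : (a +ᵂ ((∼a +ᵂ a) *ᵂ ∼a)) +ᵂ a = a := by
    symm
    calc a = a +ᵂ (∼a +ᵂ a) := hae.symm
      _ = a +ᵂ ((((∼a +ᵂ a) *ᵂ ∼a) +ᵂ (∼a +ᵂ a)) +ᵂ a) := by rw [hw5]
      _ = (a +ᵂ (((∼a +ᵂ a) *ᵂ ∼a) +ᵂ (∼a +ᵂ a))) +ᵂ a := (W.add_assoc _ _ _).symm
      _ = (a +ᵂ ((∼a +ᵂ a) *ᵂ ∼a)) +ᵂ a := by rw [hwe]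
  have hgaw : (∼a +ᵂ a) *ᵂ (a +ᵂ ∼a) = a +ᵂ ((∼a +ᵂ a) *ᵂ ∼a) := by
    calc (∼a +ᵂ a) *ᵂ (a +ᵂ ∼a)
        = (((∼a +ᵂ a) *ᵂ a) +ᵂ ∼(∼a +ᵂ a)) +ᵂ ((∼a +ᵂ a) *ᵂ ∼a) := W.distrib _ _ _
      _ = (a +ᵂ (∼a +ᵂ a)) +ᵂ ((∼a +ᵂ a) *ᵂ ∼a) := by rw [hea, hne]
      _ = a +ᵂ ((∼a +ᵂ a) +ᵂ ((∼a +ᵂ a) *ᵂ ∼a)) := W.add_assoc _ _ _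
      _ = a +ᵂ ((∼a +ᵂ a) *ᵂ ∼a) := by rw [hw3]
  have hwaw : (((∼a +ᵂ a) *ᵂ ∼a) +ᵂ a) +ᵂ ((∼a +ᵂ a) *ᵂ ∼a) = (∼a +ᵂ a) *ᵂ ∼a := by
    symm
    calc (∼a +ᵂ a) *ᵂ ∼a
        = ((∼a +ᵂ a) *ᵂ ∼a) +ᵂ ((∼a +ᵂ a) *ᵂ (a +ᵂ ∼a)) := hw4.symm
      _ = ((∼a +ᵂ a) *ᵂ ∼a) +ᵂ (a +ᵂ ((∼a +ᵂ a) *ᵂ ∼a)) := by rw [hgaw]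
      _ = (((∼a +ᵂ a) *ᵂ ∼a) +ᵂ a) +ᵂ ((∼a +ᵂ a) *ᵂ ∼a) := (W.add_assoc _ _ _).symm
  have hwna : (∼a +ᵂ a) *ᵂ ∼a = ∼a := W.neg_unique a _ haw hwaw
  rw [hwna] at hwe
  exact hwe

end WeakBrace

theorem weakBrace_rho_inv_formula {S : Type*} (W : WeakBrace S) :
    ∀ a b : S, W.inv (W.mul (W.inv (W.add (W.inv a) b)) b)
      = W.add (W.mul (W.inv b) (W.inv a)) (W.neg (W.inv b)) := by
  intro a b
  rw [W.inv_mul, W.inv_inv, W.distrib]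
  have h3 : W.mul (W.inv b) b = W.add (W.neg (W.inv b)) (W.inv b) := by
    nth_rewrite 2 [← W.inv_inv b]
    rw [W.mul_inv_eq]
  rw [h3, W.add_assoc, W.absorb (W.inv b)]
end

section
/- In a weak brace S, for all a, b ∈ S it holds that a∘b = λ_a(b) ∘ ρ_b(a), where λ_a(b) = a∘(a⁻+b) and ρ_b(a) = (a⁻+b)⁻∘b. Equivalently, a∘(a⁻+b)∘(a⁻+b)⁻∘b = a∘b. -/
section Aux

variable {S : Type*} (op : S → S → S) (iv : S → S)
  (assoc : ∀ a b c : S, op (op a b) c = op a (op b c))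
  (h1 : ∀ a : S, op (op a (iv a)) a = a)
  (h2 : ∀ a : S, op (op (iv a) a) (iv a) = iv a)
  (h3 : ∀ a x : S, op (op a x) a = a → op (op x a) x = x → x = iv a)

local infixl:65 " ⋆ " => op

include h1 h2 h3 in
/-- `iv` is an involution. -/
theorem aux_iv_iv (a : S) : iv (iv a) = a :=
  (h3 (iv a) a (h2 a) (h1 a)).symm

include assoc h1 h2 h3 in
/-- A product of idempotents is idempotent. -/
theorem aux_idem_op (e f : S) (he : e ⋆ e = e) (hf : f ⋆ f = f) :
    (e ⋆ f) ⋆ (e ⋆ f) = e ⋆ f := by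
  set x := iv (e ⋆ f) with hx
  -- f ⋆ x ⋆ e is an inverse of e ⋆ f, hence equals x
  have key : f ⋆ x ⋆ e = x := by
    apply h3
    · -- (e⋆f) ⋆ (f⋆x⋆e) ⋆ (e⋆f) = e⋆f
      have : ((e ⋆ f) ⋆ (f ⋆ x ⋆ e)) ⋆ (e ⋆ f) = ((e ⋆ f) ⋆ x) ⋆ (e ⋆ f) := by
        simp only [assoc]
        rw [← assoc f f, hf, ← assoc e e, he]
      rw [this, h1]
    · -- (f⋆x⋆e) ⋆ (e⋆f) ⋆ (f⋆x⋆e) = f⋆x⋆e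
      have : ((f ⋆ x ⋆ e) ⋆ (e ⋆ f)) ⋆ (f ⋆ x ⋆ e) = f ⋆ (x ⋆ (e ⋆ f) ⋆ x) ⋆ e := by
        simp only [assoc]
        rw [← assoc e e, he, ← assoc f f, hf]
      rw [this, h2]
  -- hence x is idempotent
  have hxx : x ⋆ x = x := by
    conv_lhs => rw [← key]
    have : (f ⋆ x ⋆ e) ⋆ (f ⋆ x ⋆ e) = f ⋆ (x ⋆ (e ⋆ f) ⋆ x) ⋆ e := by
      simp only [assoc]
    rw [this, h2, key]
  -- x is its own inverse; e⋆f is also an inverse of x, so e⋆f = x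
  have h4 : x = iv x := h3 x x (by rw [hxx, hxx]) (by rw [hxx, hxx])
  have h5 : e ⋆ f = iv x := h3 x (e ⋆ f) (by rw [hx]; exact h2 (e ⋆ f)) (by rw [hx]; exact h1 (e ⋆ f))
  rw [h5, ← h4]; exact hxx

include assoc h1 h2 h3 in
/-- Idempotents commute. -/
theorem aux_idem_comm (e f : S) (he : e ⋆ e = e) (hf : f ⋆ f = f) :
    e ⋆ f = f ⋆ e := by
  have hef : (e ⋆ f) ⋆ (e ⋆ f) = e ⋆ f := aux_idem_op op iv assoc h1 h2 h3 e f he hf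
  have hfe : (f ⋆ e) ⋆ (f ⋆ e) = f ⋆ e := aux_idem_op op iv assoc h1 h2 h3 f e hf he
  have k1 : ((e ⋆ f) ⋆ (f ⋆ e)) ⋆ (e ⋆ f) = e ⋆ f := by
    have : ((e ⋆ f) ⋆ (f ⋆ e)) ⋆ (e ⋆ f) = ((e ⋆ f) ⋆ (e ⋆ f)) := by
      simp only [assoc]
      rw [← assoc f f, hf, ← assoc e e, he]
    rw [this, hef]
  have k2 : ((f ⋆ e) ⋆ (e ⋆ f)) ⋆ (f ⋆ e) = f ⋆ e := by
    have : ((f ⋆ e) ⋆ (e ⋆ f)) ⋆ (f ⋆ e) = ((f ⋆ e) ⋆ (f ⋆ e)) := by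
      simp only [assoc]
      rw [← assoc e e, he, ← assoc f f, hf]
    rw [this, hfe]
  have i1 : f ⋆ e = iv (e ⋆ f) := h3 (e ⋆ f) (f ⋆ e) k1 k2
  have i2 : e ⋆ f = iv (e ⋆ f) := h3 (e ⋆ f) (e ⋆ f) (by rw [hef, hef]) (by rw [hef, hef])
  rw [i2, ← i1]

include assoc h1 h2 h3 in
/-- Inverse of a product. -/
theorem aux_iv_op (u v : S) : iv (u ⋆ v) = iv v ⋆ iv u := by
  have hie : (v ⋆ iv v) ⋆ (v ⋆ iv v) = v ⋆ iv v := by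
    rw [assoc, ← assoc (iv v) v (iv v), h2]
  have hif : (iv u ⋆ u) ⋆ (iv u ⋆ u) = iv u ⋆ u := by
    rw [assoc, ← assoc u (iv u) u, h1]
  have comm := aux_idem_comm op iv assoc h1 h2 h3 (v ⋆ iv v) (iv u ⋆ u) hie hif
  refine (h3 (u ⋆ v) (iv v ⋆ iv u) ?_ ?_).symm
  · -- (u⋆v)⋆(iv v⋆iv u)⋆(u⋆v) = u⋆v
    have : ((u ⋆ v) ⋆ (iv v ⋆ iv u)) ⋆ (u ⋆ v)
        = u ⋆ (((v ⋆ iv v) ⋆ (iv u ⋆ u)) ⋆ v) := by simp only [assoc]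
    rw [this, comm]
    have : u ⋆ (((iv u ⋆ u) ⋆ (v ⋆ iv v)) ⋆ v)
        = (u ⋆ iv u ⋆ u) ⋆ ((v ⋆ iv v) ⋆ v) := by simp only [assoc]
    rw [this, h1, h1]
  · -- (iv v⋆iv u)⋆(u⋆v)⋆(iv v⋆iv u) = iv v⋆iv u
    have : ((iv v ⋆ iv u) ⋆ (u ⋆ v)) ⋆ (iv v ⋆ iv u)
        = iv v ⋆ (((iv u ⋆ u) ⋆ (v ⋆ iv v)) ⋆ iv u) := by simp only [assoc]
    rw [this, ← comm]
    have : iv v ⋆ (((v ⋆ iv v) ⋆ (iv u ⋆ u)) ⋆ iv u)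
        = (iv v ⋆ v ⋆ iv v) ⋆ ((iv u ⋆ u) ⋆ iv u) := by simp only [assoc]
    rw [this, h2, h2]

include assoc h2 in
theorem aux_sandwich (a X : S) : iv a ⋆ (a ⋆ (iv a ⋆ X)) = iv a ⋆ X := by
  rw [← assoc a (iv a) X, ← assoc (iv a), ← assoc (iv a), h2]

end Aux

theorem weakBrace_lambda_mul_rho {S : Type*} (W : WeakBrace S) :
    ∀ a b : S, W.mul (W.mul (W.mul a (W.add (W.inv a) b)) (W.inv (W.add (W.inv a) b))) b
      = W.mul a b := by
  intro a b
  have inv_inv : ∀ x : S, W.inv (W.inv x) = x :=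
    aux_iv_iv W.mul W.inv W.mul_inv_mul W.inv_mul_inv W.inv_unique
  have neg_add : ∀ u v : S, W.neg (W.add u v) = W.add (W.neg v) (W.neg u) :=
    aux_iv_op W.add W.neg W.add_assoc W.add_neg_add W.neg_add_neg W.neg_unique
  set c := W.add (W.inv a) b with hc
  -- c ∘ c⁻ = -c + c = (-b + -a⁻) + (a⁻ + b)
  have step1 : W.mul c (W.inv c)
      = W.add (W.neg b) (W.add (W.add (W.neg (W.inv a)) (W.inv a)) b) := by
    rw [W.mul_inv_eq c, hc, neg_add]
    simp only [W.add_assoc]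
  -- -a⁻ + a⁻ = a⁻ ∘ a
  have step2 : W.add (W.neg (W.inv a)) (W.inv a) = W.mul (W.inv a) a := by
    have := W.mul_inv_eq (W.inv a)
    rw [inv_inv] at this
    exact this.symm
  -- a ∘ (c ∘ c⁻) = a ∘ (-b + b)
  have step3 : W.mul a (W.mul c (W.inv c)) = W.mul a (W.add (W.neg b) b) := by
    rw [step1, step2, W.distrib a (W.neg b), W.distrib a (W.mul (W.inv a) a)]
    rw [← W.mul_assoc a (W.inv a) a, W.mul_inv_mul]
    rw [W.distrib a (W.neg b) b]
    simp only [W.add_assoc]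
    congr 1
    exact aux_sandwich W.add W.neg W.add_assoc W.neg_add_neg a (W.mul a b)
  -- conclude
  calc W.mul (W.mul (W.mul a c) (W.inv c)) b
      = W.mul (W.mul a (W.mul c (W.inv c))) b := by rw [W.mul_assoc a c (W.inv c)]
    _ = W.mul (W.mul a (W.add (W.neg b) b)) b := by rw [step3]
    _ = W.mul (W.mul a (W.mul b (W.inv b))) b := by rw [W.mul_inv_eq b]
    _ = W.mul a b := by rw [W.mul_assoc a, W.mul_inv_mul]
end

section
/- Let S be a weak brace, r the map r(a,b) = (a∘(a⁻+b), (a⁻+b)⁻∘b) and rᵒᵖ the map rᵒᵖ(a,b) = (a∘b - a, (a∘b - a)⁻∘a∘b). Then r rᵒᵖ r = r, rᵒᵖ r rᵒᵖ = rᵒᵖ, and r rᵒᵖ = rᵒᵖ r; moreover (r rᵒᵖ)(a,b) = (a∘b∘b⁻, a⁻∘a∘b). -/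
namespace WBAux

structure ISg (S : Type*) where
  m : S → S → S
  i : S → S
  A : ∀ a b c : S, m (m a b) c = m a (m b c)
  P1 : ∀ a : S, m (m a (i a)) a = a
  P2 : ∀ a : S, m (m (i a) a) (i a) = i a
  U : ∀ a x : S, m (m a x) a = a → m (m x a) x = x → x = i a

namespace ISg
variable {S : Type*} (G : ISg S)

lemma inv_inv (a : S) : G.i (G.i a) = a := (G.U (G.i a) a (G.P2 a) (G.P1 a)).symm

lemma idem_inv {s : S} (h : G.m s s = s) : G.i s = s :=
  (G.U s s (by rw [h, h]) (by rw [h, h])).symm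

lemma fidem (a : S) : G.m (G.m a (G.i a)) (G.m a (G.i a)) = G.m a (G.i a) := by
  rw [G.A, ← G.A (G.i a) a (G.i a), G.P2]

lemma eidem (a : S) : G.m (G.m (G.i a) a) (G.m (G.i a) a) = G.m (G.i a) a := by
  rw [G.A, ← G.A a (G.i a) a, G.P1]

lemma idem_mul_idem {e f : S} (he : G.m e e = e) (hf : G.m f f = f) :
    G.m (G.m e f) (G.m e f) = G.m e f := by
  have chf : ∀ z, G.m f (G.m f z) = G.m f z := fun z => by rw [← G.A, hf]
  have che : ∀ z, G.m e (G.m e z) = G.m e z := fun z => by rw [← G.A, he]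
  set x := G.i (G.m e f) with hxdef
  have p2c : ∀ z, G.m x (G.m e (G.m f (G.m x z))) = G.m x z := by
    intro z
    have h := congrArg (fun w => G.m w z) (G.P2 (G.m e f))
    simp only [G.A] at h
    exact h
  have c1 : G.m (G.m (G.m e f) (G.m (G.m f x) e)) (G.m e f) = G.m e f := by
    have h := G.P1 (G.m e f)
    simp only [G.A] at h ⊢
    rw [chf, che]
    exact h
  have c2 : G.m (G.m (G.m (G.m f x) e) (G.m e f)) (G.m (G.m f x) e) = G.m (G.m f x) e := by
    simp only [G.A]
    rw [che, chf, p2c]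
  have hy : G.m (G.m f x) e = x := G.U (G.m e f) (G.m (G.m f x) e) c1 c2
  have hxx : G.m x x = x := by
    calc G.m x x = G.m (G.m (G.m f x) e) (G.m (G.m f x) e) := by rw [hy]
    _ = G.m f (G.m x (G.m e (G.m f (G.m x e)))) := by simp only [G.A]
    _ = G.m f (G.m x e) := by rw [p2c]
    _ = x := by rw [← G.A, hy]
  have hef : G.m e f = x := by
    have h1 : G.i x = G.m e f := G.inv_inv (G.m e f)
    have h2 : G.i x = x := G.idem_inv hxx
    rw [← h1, h2]
  rw [hef]; exact hxx

lemma idem_comm {e f : S} (he : G.m e e = e) (hf : G.m f f = f) :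
    G.m e f = G.m f e := by
  have chf : ∀ z, G.m f (G.m f z) = G.m f z := fun z => by rw [← G.A, hf]
  have che : ∀ z, G.m e (G.m e z) = G.m e z := fun z => by rw [← G.A, he]
  have h1 := G.idem_mul_idem he hf
  have h2 := G.idem_mul_idem hf he
  have h1' : G.m e (G.m f (G.m e f)) = G.m e f := by
    have := h1; simp only [G.A] at this; exact this
  have h2' : G.m f (G.m e (G.m f e)) = G.m f e := by
    have := h2; simp only [G.A] at this; exact this
  have d1 : G.m (G.m (G.m e f) (G.m f e)) (G.m e f) = G.m e f := by
    simp only [G.A]; rw [chf, che]; exact h1'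
  have d2 : G.m (G.m (G.m f e) (G.m e f)) (G.m f e) = G.m f e := by
    simp only [G.A]; rw [che, chf]; exact h2'
  have h := G.U (G.m e f) (G.m f e) d1 d2
  rw [h, G.idem_inv h1]

lemma inv_mul (a b : S) : G.i (G.m a b) = G.m (G.i b) (G.i a) := by
  have comm := G.idem_comm (G.fidem b) (G.eidem a)
  have c1 : G.m (G.m (G.m a b) (G.m (G.i b) (G.i a))) (G.m a b) = G.m a b := by
    calc G.m (G.m (G.m a b) (G.m (G.i b) (G.i a))) (G.m a b)
        = G.m a (G.m (G.m (G.m b (G.i b)) (G.m (G.i a) a)) b) := by simp only [G.A]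
      _ = G.m a (G.m (G.m (G.m (G.i a) a) (G.m b (G.i b))) b) := by rw [comm]
      _ = G.m (G.m (G.m a (G.i a)) a) (G.m (G.m b (G.i b)) b) := by simp only [G.A]
      _ = G.m a b := by rw [G.P1, G.A, ← G.A b (G.i b) b, G.P1]
  have c2 : G.m (G.m (G.m (G.i b) (G.i a)) (G.m a b)) (G.m (G.i b) (G.i a))
      = G.m (G.i b) (G.i a) := by
    calc G.m (G.m (G.m (G.i b) (G.i a)) (G.m a b)) (G.m (G.i b) (G.i a))
        = G.m (G.i b) (G.m (G.m (G.m (G.i a) a) (G.m b (G.i b))) (G.i a)) := by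
          simp only [G.A]
      _ = G.m (G.i b) (G.m (G.m (G.m b (G.i b)) (G.m (G.i a) a)) (G.i a)) := by rw [comm]
      _ = G.m (G.m (G.m (G.i b) b) (G.i b)) (G.m (G.m (G.i a) a) (G.i a)) := by
          simp only [G.A]
      _ = G.m (G.i b) (G.i a) := by rw [G.P2, G.P2]
  exact (G.U (G.m a b) (G.m (G.i b) (G.i a)) c1 c2).symm

end ISg
end WBAux

namespace WeakBrace
open WBAux
variable {S : Type*} (W : WeakBrace S)

def addIS : ISg S := ⟨W.add, W.neg, W.add_assoc, W.add_neg_add, W.neg_add_neg, W.neg_unique⟩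
def mulIS : ISg S := ⟨W.mul, W.inv, W.mul_assoc, W.mul_inv_mul, W.inv_mul_inv, W.inv_unique⟩

section Core
variable {W}
local infixl:65 " ⊹ " => WeakBrace.add W
local infixl:70 " ⊡ " => WeakBrace.mul W
local prefix:max "∼" => WeakBrace.neg W
local postfix:max "ᵛ" => WeakBrace.inv W

variable (W)

-- basic inverse-semigroup facts, additive
lemma nn (a : S) : ∼∼a = a := W.addIS.inv_inv a
lemma nadd (a b : S) : ∼(a ⊹ b) = ∼b ⊹ ∼a := W.addIS.inv_mul a b
lemma negidem {s : S} (h : s ⊹ s = s) : ∼s = s := W.addIS.idem_inv h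
lemma aidem_comm {s t : S} (hs : s ⊹ s = s) (ht : t ⊹ t = t) : s ⊹ t = t ⊹ s :=
  W.addIS.idem_comm hs ht
lemma fidem (a : S) : (∼a ⊹ a) ⊹ (∼a ⊹ a) = ∼a ⊹ a := W.addIS.eidem a
lemma fidem' (a : S) : (a ⊹ ∼a) ⊹ (a ⊹ ∼a) = a ⊹ ∼a := W.addIS.fidem a
-- basic, multiplicative
lemma ii (a : S) : (aᵛ)ᵛ = a := W.mulIS.inv_inv a
lemma imul (a b : S) : (a ⊡ b)ᵛ = bᵛ ⊡ aᵛ := W.mulIS.inv_mul a b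
lemma invidem {s : S} (h : s ⊡ s = s) : sᵛ = s := W.mulIS.idem_inv h
lemma midem_comm {s t : S} (hs : s ⊡ s = s) (ht : t ⊡ t = t) : s ⊡ t = t ⊡ s :=
  W.mulIS.idem_comm hs ht
lemma mfidem (a : S) : (a ⊡ aᵛ) ⊡ (a ⊡ aᵛ) = a ⊡ aᵛ := W.mulIS.fidem a
lemma meidem (a : S) : (aᵛ ⊡ a) ⊡ (aᵛ ⊡ a) = aᵛ ⊡ a := W.mulIS.eidem a
-- reassociation helpers
lemma addre {p q r : S} (h : p ⊹ q = r) (t : S) : p ⊹ (q ⊹ t) = r ⊹ t := by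
  rw [← W.add_assoc, h]
lemma mulre {p q r : S} (h : p ⊡ q = r) (t : S) : p ⊡ (q ⊡ t) = r ⊡ t := by
  rw [← W.mul_assoc, h]

-- L01: lambda
lemma lam (a b : S) : a ⊡ (aᵛ ⊹ b) = ∼a ⊹ a ⊡ b := by
  rw [W.distrib, W.mul_inv_eq, W.neg_add_neg]

-- L02: C2
lemma negmul (a b : S) : ∼(a ⊡ b) = ∼a ⊹ (a ⊡ ∼b ⊹ ∼a) := by
  have h1 : a ⊡ b ⊹ (∼a ⊹ (a ⊡ ∼b ⊹ (∼a ⊹ a ⊡ b))) = a ⊡ b := by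
    have e1 : b ⊹ (∼b ⊹ b) = b := by rw [← W.add_assoc, W.add_neg_add]
    have h := congrArg (fun z => a ⊡ z) e1
    simp only [W.distrib] at h
    simp only [W.add_assoc] at h
    exact h
  have h2 : a ⊡ ∼b ⊹ (∼a ⊹ (a ⊡ b ⊹ (∼a ⊹ a ⊡ ∼b))) = a ⊡ ∼b := by
    have e1 : ∼b ⊹ (b ⊹ ∼b) = ∼b := by rw [← W.add_assoc, W.neg_add_neg]
    have h := congrArg (fun z => a ⊡ z) e1
    simp only [W.distrib] at h
    simp only [W.add_assoc] at h
    exact h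
  have c1 : (a ⊡ b ⊹ (∼a ⊹ (a ⊡ ∼b ⊹ ∼a))) ⊹ a ⊡ b = a ⊡ b := by
    simp only [W.add_assoc]; exact h1
  have c2 : ((∼a ⊹ (a ⊡ ∼b ⊹ ∼a)) ⊹ a ⊡ b) ⊹ (∼a ⊹ (a ⊡ ∼b ⊹ ∼a)) =
      ∼a ⊹ (a ⊡ ∼b ⊹ ∼a) := by
    have h := congrArg (fun w => w ⊹ ∼a) h2
    simp only [W.add_assoc] at h
    simp only [W.add_assoc]
    rw [h]
  exact (W.neg_unique (a ⊡ b) (∼a ⊹ (a ⊡ ∼b ⊹ ∼a)) c1 c2).symm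

-- L03: C1
lemma mulneg (a b : S) : a ⊡ ∼b = a ⊹ (∼(a ⊡ b) ⊹ a) := by
  have h := W.negmul a (∼b)
  rw [W.nn] at h
  have := congrArg W.neg h
  rw [W.nn, W.nadd, W.nadd, W.nn] at this
  rw [this, W.add_assoc]

-- L05: Lstar
lemma lstar (a : S) : a ⊡ ∼(aᵛ) = a ⊹ a := by
  rw [W.mulneg a (aᵛ), W.mul_inv_eq, W.negidem (W.fidem a)]
  rw [← W.add_assoc, ← W.add_assoc, W.add_neg_add]

-- L06: Clifford
lemma cliff (a : S) : a ⊹ ∼a = ∼a ⊹ a := by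
  have c1 : ∀ x : S, ∼x ⊹ x = (x ⊹ ∼x) ⊹ (∼x ⊹ x) := by
    intro x
    have h := W.mulneg x (∼(xᵛ))
    rw [W.nn, W.lstar, W.mul_inv_eq, W.nadd] at h
    calc ∼x ⊹ x = x ⊹ ((∼x ⊹ ∼x) ⊹ x) := h
      _ = (x ⊹ ∼x) ⊹ (∼x ⊹ x) := by simp only [W.add_assoc]
  have h1 := c1 a
  have h2 := c1 (∼a)
  rw [W.nn] at h2
  have comm := W.aidem_comm (W.fidem' a) (W.fidem a)
  rw [comm] at h1
  exact h2.trans h1.symm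

lemma fabs_r (x : S) : x ⊹ (∼x ⊹ x) = x := by rw [← W.add_assoc, W.add_neg_add]
lemma fabs_l (x : S) : (∼x ⊹ x) ⊹ x = x := by rw [← W.cliff, W.add_neg_add]
lemma nabs_r (x : S) : ∼x ⊹ (∼x ⊹ x) = ∼x := by
  rw [← W.cliff, ← W.add_assoc, W.neg_add_neg]
lemma nabs_l (x : S) : (∼x ⊹ x) ⊹ ∼x = ∼x := W.neg_add_neg x

-- L07: centrality of additive idempotents
lemma fabs_r' (a : S) : a ⊹ (a ⊹ ∼a) = a := by
  rw [W.cliff]; exact W.fabs_r a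

lemma central {s : S} (hs : s ⊹ s = s) (a : S) : s ⊹ a = a ⊹ s := by
  have hns : ∼s = s := W.negidem hs
  have hfa : (a ⊹ ∼a) ⊹ (a ⊹ ∼a) = a ⊹ ∼a := W.fidem' a
  have comm := W.aidem_comm hfa hs
  have h1 : (s ⊹ a) ⊹ ∼(s ⊹ a) = (a ⊹ ∼a) ⊹ s := by
    rw [W.nadd, hns]
    calc (s ⊹ a) ⊹ (∼a ⊹ s) = s ⊹ ((a ⊹ ∼a) ⊹ s) := by simp only [W.add_assoc]
      _ = s ⊹ (s ⊹ (a ⊹ ∼a)) := by rw [comm]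
      _ = (s ⊹ s) ⊹ (a ⊹ ∼a) := (W.add_assoc _ _ _).symm
      _ = s ⊹ (a ⊹ ∼a) := by rw [hs]
      _ = (a ⊹ ∼a) ⊹ s := by rw [comm]
  have h2 : (s ⊹ a) ⊹ ∼(s ⊹ a) = ∼a ⊹ (s ⊹ a) := by
    rw [W.cliff (s ⊹ a), W.nadd, hns]
    simp only [W.add_assoc]
    rw [W.addre hs a]
  have hIV : (a ⊹ ∼a) ⊹ s = ∼a ⊹ (s ⊹ a) := h1.symm.trans h2
  calc s ⊹ a
      = ((s ⊹ a) ⊹ ∼(s ⊹ a)) ⊹ (s ⊹ a) := (W.add_neg_add (s ⊹ a)).symm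
    _ = ((a ⊹ ∼a) ⊹ s) ⊹ (s ⊹ a) := by rw [h1]
    _ = a ⊹ (∼a ⊹ (s ⊹ (s ⊹ a))) := by simp only [W.add_assoc]
    _ = a ⊹ (∼a ⊹ (s ⊹ a)) := by rw [W.addre hs a]
    _ = a ⊹ ((a ⊹ ∼a) ⊹ s) := by rw [← hIV]
    _ = (a ⊹ (a ⊹ ∼a)) ⊹ s := (W.add_assoc _ _ _).symm
    _ = a ⊹ s := by rw [W.fabs_r']

-- E(+) = E(mul) and friends
lemma idem_mulinv {s : S} (h : s ⊹ s = s) : s ⊡ sᵛ = s := by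
  rw [W.mul_inv_eq, W.negidem h]; exact h

lemma idem_mul {s : S} (h : s ⊹ s = s) : s ⊡ s = s := by
  have h1 := W.idem_mulinv h
  calc s ⊡ s = (s ⊡ sᵛ) ⊡ (s ⊡ sᵛ) := by rw [h1]
    _ = s ⊡ sᵛ := W.mfidem s
    _ = s := h1

lemma idem_inv_self {s : S} (h : s ⊹ s = s) : sᵛ = s := W.invidem (W.idem_mul h)

lemma midem_aidem {s : S} (h : s ⊡ s = s) : s ⊹ s = s := by
  have h1 : sᵛ = s := W.invidem h
  have h2 := W.mul_inv_eq s
  rw [h1, h] at h2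
  have h4 := W.fidem s
  rw [← h2] at h4
  exact h4

-- M6 family
lemma M6sand (a b : S) : a ⊡ b = (∼a ⊹ a) ⊹ (a ⊡ b ⊹ (∼a ⊹ a)) := by
  have h := W.mulneg a (∼b)
  rw [W.nn] at h
  have h2 := W.negmul a (∼b)
  rw [W.nn] at h2
  rw [h2] at h
  simp only [W.add_assoc] at h
  calc a ⊡ b = a ⊹ (∼a ⊹ (a ⊡ b ⊹ (∼a ⊹ a))) := h
    _ = (a ⊹ ∼a) ⊹ (a ⊡ b ⊹ (∼a ⊹ a)) := (W.add_assoc _ _ _).symm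
    _ = (∼a ⊹ a) ⊹ (a ⊡ b ⊹ (∼a ⊹ a)) := by rw [W.cliff]

lemma M6r (a b : S) : a ⊡ b ⊹ (∼a ⊹ a) = a ⊡ b := by
  have hs := W.M6sand a b
  calc a ⊡ b ⊹ (∼a ⊹ a)
      = ((∼a ⊹ a) ⊹ (a ⊡ b ⊹ (∼a ⊹ a))) ⊹ (∼a ⊹ a) := by rw [← hs]
    _ = (∼a ⊹ a) ⊹ (a ⊡ b ⊹ ((∼a ⊹ a) ⊹ (∼a ⊹ a))) := by simp only [W.add_assoc]
    _ = (∼a ⊹ a) ⊹ (a ⊡ b ⊹ (∼a ⊹ a)) := by rw [W.fidem]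
    _ = a ⊡ b := hs.symm

lemma M6l (a b : S) : (∼a ⊹ a) ⊹ a ⊡ b = a ⊡ b := by
  have hs := W.M6sand a b
  calc (∼a ⊹ a) ⊹ a ⊡ b
      = (∼a ⊹ a) ⊹ ((∼a ⊹ a) ⊹ (a ⊡ b ⊹ (∼a ⊹ a))) := by rw [← hs]
    _ = ((∼a ⊹ a) ⊹ (∼a ⊹ a)) ⊹ (a ⊡ b ⊹ (∼a ⊹ a)) := (W.add_assoc _ _ _).symm
    _ = (∼a ⊹ a) ⊹ (a ⊡ b ⊹ (∼a ⊹ a)) := by rw [W.fidem]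
    _ = a ⊡ b := hs.symm

lemma M7 (a b : S) : a ⊹ (∼a ⊹ a ⊡ b) = a ⊡ b := by
  calc a ⊹ (∼a ⊹ a ⊡ b) = (a ⊹ ∼a) ⊹ a ⊡ b := (W.add_assoc _ _ _).symm
    _ = (∼a ⊹ a) ⊹ a ⊡ b := by rw [W.cliff]
    _ = a ⊡ b := W.M6l a b

lemma M10 (a b : S) : a ⊡ (∼b ⊹ b) = a ⊹ (∼(a ⊡ b) ⊹ a ⊡ b) := by
  rw [W.distrib, W.mulneg]
  simp only [W.add_assoc]
  rw [W.M7]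

lemma K1 (w t : S) : ∼(w ⊡ t) ⊹ w ⊡ t = w ⊡ ((∼t ⊹ t) ⊡ wᵛ) := by
  rw [← W.mul_inv_eq (w ⊡ t), W.imul, ← W.mul_inv_eq t]
  simp only [W.mul_assoc]

lemma eform (x : S) : xᵛ ⊡ x = ∼xᵛ ⊹ xᵛ := by
  have h := W.mul_inv_eq (xᵛ)
  rw [W.ii] at h
  exact h

-- Q1 : product of idempotents is their sum
lemma Q1 {p q : S} (hp : p ⊹ p = p) (hq : q ⊹ q = q) : p ⊡ q = p ⊹ q := by
  have hpm := W.idem_mul hp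
  have hqm := W.idem_mul hq
  have hnp := W.negidem hp
  have hnq := W.negidem hq
  have gm : (p ⊡ q) ⊡ (p ⊡ q) = p ⊡ q := W.mulIS.idem_mul_idem hpm hqm
  have ga : (p ⊡ q) ⊹ (p ⊡ q) = p ⊡ q := W.midem_aidem gm
  have pg : p ⊹ p ⊡ q = p ⊡ q := by
    have h := W.M6l p q
    rw [hnp, hp] at h
    exact h
  have comm_pq : p ⊡ q = q ⊡ p := W.midem_comm hpm hqm
  have qg : q ⊹ p ⊡ q = p ⊡ q := by
    have h := W.M6l q p
    rw [hnq, hq] at h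
    rw [comm_pq]
    exact h
  have ha : (p ⊹ q) ⊹ (p ⊹ q) = p ⊹ q := by
    calc (p ⊹ q) ⊹ (p ⊹ q) = p ⊹ ((q ⊹ p) ⊹ q) := by simp only [W.add_assoc]
      _ = p ⊹ ((p ⊹ q) ⊹ q) := by rw [W.central hq p]
      _ = p ⊹ (p ⊹ (q ⊹ q)) := by rw [W.add_assoc]
      _ = p ⊹ (p ⊹ q) := by rw [hq]
      _ = (p ⊹ p) ⊹ q := (W.add_assoc _ _ _).symm
      _ = p ⊹ q := by rw [hp]
  have hm := W.idem_mul ha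
  have hnh := W.negidem ha
  have ph : p ⊡ (p ⊹ q) = p ⊡ q := by
    rw [W.distrib, hpm, hnp, hp]
    exact pg
  have qh : q ⊡ (p ⊹ q) = p ⊡ q := by
    rw [W.distrib, hqm, hnq, ← comm_pq, W.add_assoc, hq, ← W.central hq (p ⊡ q)]
    exact qg
  have hph := W.midem_comm hm hpm
  have hqh := W.midem_comm hm hqm
  have hh : p ⊹ q = p ⊡ q ⊹ (p ⊹ q) := by
    calc p ⊹ q = (p ⊹ q) ⊡ (p ⊹ q) := hm.symm
      _ = ((p ⊹ q) ⊡ p ⊹ ∼(p ⊹ q)) ⊹ (p ⊹ q) ⊡ q := W.distrib _ p q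
      _ = (p ⊡ (p ⊹ q) ⊹ (p ⊹ q)) ⊹ q ⊡ (p ⊹ q) := by rw [hph, hqh, hnh]
      _ = (p ⊡ q ⊹ (p ⊹ q)) ⊹ p ⊡ q := by rw [ph, qh]
      _ = p ⊡ q ⊹ ((p ⊹ q) ⊹ p ⊡ q) := W.add_assoc _ _ _
      _ = p ⊡ q ⊹ (p ⊡ q ⊹ (p ⊹ q)) := by rw [← W.central ga (p ⊹ q)]
      _ = (p ⊡ q ⊹ p ⊡ q) ⊹ (p ⊹ q) := (W.add_assoc _ _ _).symm
      _ = p ⊡ q ⊹ (p ⊹ q) := by rw [ga]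
  have gh : p ⊡ q ⊹ (p ⊹ q) = p ⊡ q := by
    calc p ⊡ q ⊹ (p ⊹ q) = (p ⊡ q ⊹ p) ⊹ q := (W.add_assoc _ _ _).symm
      _ = (p ⊹ p ⊡ q) ⊹ q := by rw [← W.central hp (p ⊡ q)]
      _ = p ⊡ q ⊹ q := by rw [pg]
      _ = q ⊹ p ⊡ q := by rw [← W.central hq (p ⊡ q)]
      _ = p ⊡ q := qg
  exact (hh.trans gh).symm

-- the key lemma: idempotent times anything = idempotent plus anything
lemma Mleft {e : S} (he : e ⊹ e = e) (b : S) : e ⊡ b = e ⊹ b := by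
  have hem := W.idem_mul he
  have hev := W.idem_inv_self he
  have hFb : (∼b ⊹ b) ⊹ (∼b ⊹ b) = ∼b ⊹ b := W.fidem b
  have hFbm : (∼b ⊹ b) ⊡ (∼b ⊹ b) = ∼b ⊹ b := W.idem_mul hFb
  have hk0 : (bᵛ ⊡ e)ᵛ = e ⊡ b := by rw [W.imul, hev, W.ii]
  have hkidem_m : (bᵛ ⊡ (e ⊡ b)) ⊡ (bᵛ ⊡ (e ⊡ b)) = bᵛ ⊡ (e ⊡ b) := by
    have h := W.mfidem (bᵛ ⊡ e)
    rw [hk0] at h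
    have h2 : (bᵛ ⊡ e) ⊡ (e ⊡ b) = bᵛ ⊡ (e ⊡ b) := by
      rw [W.mul_assoc, ← W.mul_assoc e e b, hem]
    rw [h2] at h
    exact h
  have hk : (bᵛ ⊡ (e ⊡ b)) ⊹ (bᵛ ⊡ (e ⊡ b)) = bᵛ ⊡ (e ⊡ b) := W.midem_aidem hkidem_m
  have fy_eq : ∼(e ⊡ b) ⊹ e ⊡ b = e ⊹ (∼b ⊹ b) := by
    rw [W.K1 e b, hev, W.midem_comm hFbm hem, ← W.mul_assoc, hem]
    exact W.Q1 he hFb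
  have sub3 : (b ⊡ bᵛ) ⊡ ((e ⊡ b) ⊡ (e ⊡ b)ᵛ) = (e ⊡ b) ⊡ (e ⊡ b)ᵛ := by
    have hyidem : ((e ⊡ b) ⊡ (e ⊡ b)ᵛ) ⊹ ((e ⊡ b) ⊡ (e ⊡ b)ᵛ) = (e ⊡ b) ⊡ (e ⊡ b)ᵛ :=
      W.midem_aidem (W.mfidem (e ⊡ b))
    have hbb : (b ⊡ bᵛ) ⊹ (b ⊡ bᵛ) = b ⊡ bᵛ := W.midem_aidem (W.mfidem b)
    rw [W.Q1 hbb hyidem, W.mul_inv_eq (e ⊡ b), fy_eq, W.mul_inv_eq b]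
    calc (∼b ⊹ b) ⊹ (e ⊹ (∼b ⊹ b)) = ((∼b ⊹ b) ⊹ e) ⊹ (∼b ⊹ b) := (W.add_assoc _ _ _).symm
      _ = (e ⊹ (∼b ⊹ b)) ⊹ (∼b ⊹ b) := by rw [W.central hFb e]
      _ = e ⊹ ((∼b ⊹ b) ⊹ (∼b ⊹ b)) := W.add_assoc _ _ _
      _ = e ⊹ (∼b ⊹ b) := by rw [hFb]
  have stepA : (b ⊡ bᵛ) ⊡ (e ⊡ b) = e ⊡ b := by
    calc (b ⊡ bᵛ) ⊡ (e ⊡ b)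
        = (b ⊡ bᵛ) ⊡ (((e ⊡ b) ⊡ (e ⊡ b)ᵛ) ⊡ (e ⊡ b)) := by rw [W.mul_inv_mul]
      _ = ((b ⊡ bᵛ) ⊡ ((e ⊡ b) ⊡ (e ⊡ b)ᵛ)) ⊡ (e ⊡ b) := (W.mul_assoc _ _ _).symm
      _ = ((e ⊡ b) ⊡ (e ⊡ b)ᵛ) ⊡ (e ⊡ b) := by rw [sub3]
      _ = e ⊡ b := W.mul_inv_mul _
  have stepB : b ⊡ (bᵛ ⊡ (e ⊡ b)) = e ⊡ b := by
    rw [← W.mul_assoc]; exact stepA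
  have hκ : (∼b ⊹ e ⊡ b) ⊹ (∼b ⊹ e ⊡ b) = ∼b ⊹ e ⊡ b := by
    rw [← stepB]
    calc (∼b ⊹ b ⊡ (bᵛ ⊡ (e ⊡ b))) ⊹ (∼b ⊹ b ⊡ (bᵛ ⊡ (e ⊡ b)))
        = ∼b ⊹ ((b ⊡ (bᵛ ⊡ (e ⊡ b)) ⊹ ∼b) ⊹ b ⊡ (bᵛ ⊡ (e ⊡ b))) := by
          simp only [W.add_assoc]
      _ = ∼b ⊹ (b ⊡ ((bᵛ ⊡ (e ⊡ b)) ⊹ (bᵛ ⊡ (e ⊡ b)))) := by rw [← W.distrib]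
      _ = ∼b ⊹ b ⊡ (bᵛ ⊡ (e ⊡ b)) := by rw [hk]
  have yb := W.M7 b (bᵛ ⊡ (e ⊡ b))
  rw [stepB] at yb
  have hnκ : ∼(∼b ⊹ e ⊡ b) = ∼b ⊹ e ⊡ b := W.negidem hκ
  have fy2 : ∼(e ⊡ b) ⊹ e ⊡ b = (∼b ⊹ e ⊡ b) ⊹ (∼b ⊹ b) := by
    conv_lhs => rw [← yb]
    rw [W.nadd, hnκ]
    calc ((∼b ⊹ e ⊡ b) ⊹ ∼b) ⊹ (b ⊹ (∼b ⊹ e ⊡ b))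
        = (∼b ⊹ e ⊡ b) ⊹ ((∼b ⊹ b) ⊹ (∼b ⊹ e ⊡ b)) := by simp only [W.add_assoc]
      _ = (∼b ⊹ e ⊡ b) ⊹ ((∼b ⊹ e ⊡ b) ⊹ (∼b ⊹ b)) := by
          rw [W.central hFb (∼b ⊹ e ⊡ b)]
      _ = ((∼b ⊹ e ⊡ b) ⊹ (∼b ⊹ e ⊡ b)) ⊹ (∼b ⊹ b) := (W.add_assoc _ _ _).symm
      _ = (∼b ⊹ e ⊡ b) ⊹ (∼b ⊹ b) := by rw [hκ]
  have key : (∼b ⊹ e ⊡ b) ⊹ (∼b ⊹ b) = e ⊹ (∼b ⊹ b) := fy2.symm.trans fy_eq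
  calc e ⊡ b = b ⊹ (∼b ⊹ e ⊡ b) := yb.symm
    _ = (∼b ⊹ e ⊡ b) ⊹ b := by rw [← W.central hκ b]
    _ = (∼b ⊹ e ⊡ b) ⊹ ((∼b ⊹ b) ⊹ b) := by rw [W.fabs_l]
    _ = ((∼b ⊹ e ⊡ b) ⊹ (∼b ⊹ b)) ⊹ b := (W.add_assoc _ _ _).symm
    _ = (e ⊹ (∼b ⊹ b)) ⊹ b := by rw [key]
    _ = e ⊹ ((∼b ⊹ b) ⊹ b) := W.add_assoc _ _ _
    _ = e ⊹ b := by rw [W.fabs_l]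

lemma M5 (a b : S) : a ⊡ (b ⊹ aᵛ) = a ⊡ b ⊹ ∼a := by
  rw [W.distrib, W.mul_inv_eq, W.add_assoc, W.nabs_r]

lemma fsum {s : S} (hs : s ⊹ s = s) (z : S) :
    ∼(s ⊹ z) ⊹ (s ⊹ z) = s ⊹ (∼z ⊹ z) := by
  rw [W.nadd, W.negidem hs]
  calc (∼z ⊹ s) ⊹ (s ⊹ z) = ∼z ⊹ (s ⊹ (s ⊹ z)) := by simp only [W.add_assoc]
    _ = ∼z ⊹ (s ⊹ z) := by rw [W.addre hs z]
    _ = (∼z ⊹ s) ⊹ z := (W.add_assoc _ _ _).symm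
    _ = (s ⊹ ∼z) ⊹ z := by rw [← W.central hs (∼z)]
    _ = s ⊹ (∼z ⊹ z) := W.add_assoc _ _ _

lemma xyy (x y : S) : (x ⊡ y) ⊡ yᵛ = x ⊹ (∼(x ⊡ y) ⊹ x ⊡ y) := by
  rw [W.mul_assoc, W.mul_inv_eq, W.M10]

lemma exy (x y : S) : (xᵛ ⊡ x) ⊡ y = (xᵛ ⊡ x) ⊹ y :=
  W.Mleft (W.midem_aidem (W.meidem x)) y

lemma fsum2 (w z : S) : ∼(w ⊹ z) ⊹ (w ⊹ z) = (∼w ⊹ w) ⊹ (∼z ⊹ z) := by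
  rw [W.nadd]
  calc (∼z ⊹ ∼w) ⊹ (w ⊹ z) = ∼z ⊹ ((∼w ⊹ w) ⊹ z) := by simp only [W.add_assoc]
    _ = ∼z ⊹ (z ⊹ (∼w ⊹ w)) := by rw [W.central (W.fidem w) z]
    _ = (∼z ⊹ z) ⊹ (∼w ⊹ w) := (W.add_assoc _ _ _).symm
    _ = (∼w ⊹ w) ⊹ (∼z ⊹ z) := W.aidem_comm (W.fidem z) (W.fidem w)

-- RF : the second component of r rewritten
lemma RF (x y : S) :
    (x ⊡ (xᵛ ⊹ y))ᵛ ⊡ (x ⊡ y) = (xᵛ ⊹ y)ᵛ ⊡ y := by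
  set d := xᵛ ⊹ y with hd
  have he : (xᵛ ⊡ x) ⊹ (xᵛ ⊡ x) = xᵛ ⊡ x := W.midem_aidem (W.meidem x)
  have hΦ : (∼(dᵛ ⊡ xᵛ) ⊹ dᵛ ⊡ xᵛ) ⊹ (∼(dᵛ ⊡ xᵛ) ⊹ dᵛ ⊡ xᵛ) = ∼(dᵛ ⊡ xᵛ) ⊹ dᵛ ⊡ xᵛ :=
    W.fidem _
  have hΨi : (∼(dᵛ ⊡ y) ⊹ dᵛ ⊡ y) ⊹ (∼(dᵛ ⊡ y) ⊹ dᵛ ⊡ y) = ∼(dᵛ ⊡ y) ⊹ dᵛ ⊡ y :=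
    W.fidem _
  have hFd : (∼d ⊹ d) ⊹ (∼d ⊹ d) = ∼d ⊹ d := W.fidem d
  have Fd_val : ∼d ⊹ d = (xᵛ ⊡ x) ⊹ (∼y ⊹ y) := by
    rw [hd, W.fsum2, W.eform]
  have eFd : (xᵛ ⊡ x) ⊡ (∼d ⊹ d) = ∼d ⊹ d := by
    rw [W.Q1 he hFd, Fd_val, ← W.add_assoc, he]
  have ΦΨ : (∼(dᵛ ⊡ xᵛ) ⊹ dᵛ ⊡ xᵛ) ⊡ (∼(dᵛ ⊡ y) ⊹ dᵛ ⊡ y) = ∼(dᵛ ⊡ y) ⊹ dᵛ ⊡ y := by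
    rw [W.K1 dᵛ xᵛ, W.K1 dᵛ y, W.ii, ← W.eform]
    calc (dᵛ ⊡ ((xᵛ ⊡ x) ⊡ d)) ⊡ (dᵛ ⊡ ((∼y ⊹ y) ⊡ d))
        = dᵛ ⊡ ((xᵛ ⊡ x) ⊡ ((d ⊡ dᵛ) ⊡ ((∼y ⊹ y) ⊡ d))) := by simp only [W.mul_assoc]
      _ = dᵛ ⊡ (((xᵛ ⊡ x) ⊡ (d ⊡ dᵛ)) ⊡ ((∼y ⊹ y) ⊡ d)) := by simp only [W.mul_assoc]
      _ = dᵛ ⊡ ((d ⊡ dᵛ) ⊡ ((∼y ⊹ y) ⊡ d)) := by rw [W.mul_inv_eq d, eFd]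
      _ = (dᵛ ⊡ (d ⊡ dᵛ)) ⊡ ((∼y ⊹ y) ⊡ d) := (W.mul_assoc _ _ _).symm
      _ = ((dᵛ ⊡ d) ⊡ dᵛ) ⊡ ((∼y ⊹ y) ⊡ d) := by rw [← W.mul_assoc dᵛ d dᵛ]
      _ = dᵛ ⊡ ((∼y ⊹ y) ⊡ d) := by rw [W.inv_mul_inv]
  have ΦΨa : (∼(dᵛ ⊡ xᵛ) ⊹ dᵛ ⊡ xᵛ) ⊹ (∼(dᵛ ⊡ y) ⊹ dᵛ ⊡ y) = ∼(dᵛ ⊡ y) ⊹ dᵛ ⊡ y := by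
    rw [← W.Q1 hΦ hΨi]; exact ΦΨ
  have ΦZ : (∼(dᵛ ⊡ xᵛ) ⊹ dᵛ ⊡ xᵛ) ⊹ dᵛ ⊡ y = dᵛ ⊡ y := by
    calc (∼(dᵛ ⊡ xᵛ) ⊹ dᵛ ⊡ xᵛ) ⊹ dᵛ ⊡ y
        = (∼(dᵛ ⊡ xᵛ) ⊹ dᵛ ⊡ xᵛ) ⊹ ((∼(dᵛ ⊡ y) ⊹ dᵛ ⊡ y) ⊹ dᵛ ⊡ y) := by rw [W.fabs_l]
      _ = ((∼(dᵛ ⊡ xᵛ) ⊹ dᵛ ⊡ xᵛ) ⊹ (∼(dᵛ ⊡ y) ⊹ dᵛ ⊡ y)) ⊹ dᵛ ⊡ y :=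
          (W.add_assoc _ _ _).symm
      _ = (∼(dᵛ ⊡ y) ⊹ dᵛ ⊡ y) ⊹ dᵛ ⊡ y := by rw [ΦΨa]
      _ = dᵛ ⊡ y := W.fabs_l _
  calc (x ⊡ d)ᵛ ⊡ (x ⊡ y)
      = (dᵛ ⊡ xᵛ) ⊡ (x ⊡ y) := by rw [W.imul]
    _ = dᵛ ⊡ ((xᵛ ⊡ x) ⊡ y) := by simp only [W.mul_assoc]
    _ = dᵛ ⊡ ((xᵛ ⊡ x) ⊹ y) := by rw [W.exy]
    _ = (dᵛ ⊡ (xᵛ ⊡ x) ⊹ ∼dᵛ) ⊹ dᵛ ⊡ y := W.distrib _ _ _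
    _ = ((dᵛ ⊹ (∼(dᵛ ⊡ xᵛ) ⊹ dᵛ ⊡ xᵛ)) ⊹ ∼dᵛ) ⊹ dᵛ ⊡ y := by
        rw [W.eform x, W.M10 dᵛ xᵛ]
    _ = dᵛ ⊹ (((∼(dᵛ ⊡ xᵛ) ⊹ dᵛ ⊡ xᵛ) ⊹ ∼dᵛ) ⊹ dᵛ ⊡ y) := by simp only [W.add_assoc]
    _ = dᵛ ⊹ ((∼dᵛ ⊹ (∼(dᵛ ⊡ xᵛ) ⊹ dᵛ ⊡ xᵛ)) ⊹ dᵛ ⊡ y) := by rw [W.central hΦ (∼dᵛ)]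
    _ = dᵛ ⊹ (∼dᵛ ⊹ ((∼(dᵛ ⊡ xᵛ) ⊹ dᵛ ⊡ xᵛ) ⊹ dᵛ ⊡ y)) := by simp only [W.add_assoc]
    _ = dᵛ ⊹ (∼dᵛ ⊹ dᵛ ⊡ y) := by rw [ΦZ]
    _ = dᵛ ⊡ y := W.M7 _ _

-- tail lemma
lemma tail (a b : S) : b ⊡ (bᵛ ⊡ (aᵛ ⊡ (a ⊡ b))) = aᵛ ⊡ (a ⊡ b) := by
  have heA : (aᵛ ⊡ a) ⊹ (aᵛ ⊡ a) = aᵛ ⊡ a := W.midem_aidem (W.meidem a)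
  calc b ⊡ (bᵛ ⊡ (aᵛ ⊡ (a ⊡ b)))
      = (b ⊡ bᵛ) ⊡ ((aᵛ ⊡ a) ⊡ b) := by simp only [W.mul_assoc]
    _ = (∼b ⊹ b) ⊡ ((aᵛ ⊡ a) ⊹ b) := by rw [W.mul_inv_eq b, W.exy]
    _ = (∼b ⊹ b) ⊹ ((aᵛ ⊡ a) ⊹ b) := W.Mleft (W.fidem b) _
    _ = ((∼b ⊹ b) ⊹ (aᵛ ⊡ a)) ⊹ b := (W.add_assoc _ _ _).symm
    _ = ((aᵛ ⊡ a) ⊹ (∼b ⊹ b)) ⊹ b := by rw [← W.central heA (∼b ⊹ b)]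
    _ = (aᵛ ⊡ a) ⊹ ((∼b ⊹ b) ⊹ b) := W.add_assoc _ _ _
    _ = (aᵛ ⊡ a) ⊹ b := by rw [W.fabs_l]
    _ = (aᵛ ⊡ a) ⊡ b := (W.exy a b).symm
    _ = aᵛ ⊡ (a ⊡ b) := W.mul_assoc _ _ _

-- helper for the rop side
lemma uvlem (x y : S) :
    (x ⊡ y ⊹ ∼x) ⊡ (((x ⊡ y ⊹ ∼x)ᵛ ⊡ x) ⊡ y)
      = (∼(x ⊡ y ⊹ ∼x) ⊹ (x ⊡ y ⊹ ∼x)) ⊹ x ⊡ y := by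
  rw [W.mul_assoc ((x ⊡ y ⊹ ∼x)ᵛ) x y, ← W.mul_assoc, W.mul_inv_eq,
    W.Mleft (W.fidem (x ⊡ y ⊹ ∼x)) (x ⊡ y)]

-- first component of r ∘ rop
lemma main4a (x y : S) :
    (x ⊡ y ⊹ ∼x) ⊡ ((x ⊡ y ⊹ ∼x)ᵛ ⊹ ((x ⊡ y ⊹ ∼x)ᵛ ⊡ x) ⊡ y) = (x ⊡ y) ⊡ yᵛ := by
  rw [W.lam (x ⊡ y ⊹ ∼x) (((x ⊡ y ⊹ ∼x)ᵛ ⊡ x) ⊡ y), W.uvlem,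
    ← W.add_assoc, W.nabs_r, W.nadd, W.nn, W.add_assoc, W.xyy]

-- s9 helper
lemma ainvFu (x y : S) :
    xᵛ ⊡ (∼(x ⊡ y ⊹ ∼x) ⊹ (x ⊡ y ⊹ ∼x)) = (y ⊡ yᵛ) ⊡ xᵛ := by
  have he : (xᵛ ⊡ x) ⊹ (xᵛ ⊡ x) = xᵛ ⊡ x := W.midem_aidem (W.meidem x)
  have hFb : (∼y ⊹ y) ⊹ (∼y ⊹ y) = ∼y ⊹ y := W.fidem y
  have Fu_val : ∼(x ⊡ y ⊹ ∼x) ⊹ (x ⊡ y ⊹ ∼x)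
      = (∼(x ⊡ y) ⊹ x ⊡ y) ⊹ (∼x ⊹ x) := by
    rw [W.fsum2, W.nn, W.cliff]
  have hT : xᵛ ⊡ (x ⊡ y) = (xᵛ ⊡ x) ⊹ y := by
    rw [← W.mul_assoc]; exact W.exy x y
  have aΦp : xᵛ ⊡ (∼(x ⊡ y) ⊹ x ⊡ y) = xᵛ ⊹ (∼y ⊹ y) := by
    rw [W.M10 xᵛ (x ⊡ y), hT, W.fsum he y, ← W.add_assoc, W.eform, W.fabs_r]
  have aFa : xᵛ ⊡ (∼x ⊹ x) = xᵛ := by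
    rw [W.M10 xᵛ x, W.negidem he, he, W.eform, W.fabs_r]
  rw [Fu_val, W.distrib, aΦp, aFa]
  calc (xᵛ ⊹ (∼y ⊹ y) ⊹ ∼xᵛ) ⊹ xᵛ
      = xᵛ ⊹ ((∼y ⊹ y) ⊹ (∼xᵛ ⊹ xᵛ)) := by simp only [W.add_assoc]
    _ = xᵛ ⊹ ((∼xᵛ ⊹ xᵛ) ⊹ (∼y ⊹ y)) := by rw [W.aidem_comm hFb (W.fidem xᵛ)]
    _ = (xᵛ ⊹ (∼xᵛ ⊹ xᵛ)) ⊹ (∼y ⊹ y) := (W.add_assoc _ _ _).symm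
    _ = xᵛ ⊹ (∼y ⊹ y) := by rw [W.fabs_r]
    _ = (∼y ⊹ y) ⊹ xᵛ := by rw [← W.central hFb xᵛ]
    _ = (∼y ⊹ y) ⊡ xᵛ := (W.Mleft hFb xᵛ).symm
    _ = (y ⊡ yᵛ) ⊡ xᵛ := by rw [W.mul_inv_eq y]

-- second component of r ∘ rop
lemma main4b (x y : S) :
    ((x ⊡ y ⊹ ∼x)ᵛ ⊹ ((x ⊡ y ⊹ ∼x)ᵛ ⊡ x) ⊡ y)ᵛ ⊡ (((x ⊡ y ⊹ ∼x)ᵛ ⊡ x) ⊡ y)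
      = (xᵛ ⊡ x) ⊡ y := by
  have h1 : ((x ⊡ y ⊹ ∼x)ᵛ ⊡ x) ⊡ y = (x ⊡ y ⊹ ∼x)ᵛ ⊡ (x ⊡ y) := W.mul_assoc _ _ _
  rw [h1, ← W.RF (x ⊡ y ⊹ ∼x) ((x ⊡ y ⊹ ∼x)ᵛ ⊡ (x ⊡ y)), ← h1, W.main4a x y, W.uvlem]
  -- goal : ((x⊡y)⊡yᵛ)ᵛ ⊡ ((∼u ⊹ u) ⊹ x⊡y) = (xᵛ⊡x)⊡y
  rw [← W.Mleft (W.fidem (x ⊡ y ⊹ ∼x)) (x ⊡ y)]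
  rw [W.imul, W.imul, W.ii]
  calc (y ⊡ (yᵛ ⊡ xᵛ)) ⊡ ((∼(x ⊡ y ⊹ ∼x) ⊹ (x ⊡ y ⊹ ∼x)) ⊡ (x ⊡ y))
      = (y ⊡ yᵛ) ⊡ ((xᵛ ⊡ (∼(x ⊡ y ⊹ ∼x) ⊹ (x ⊡ y ⊹ ∼x))) ⊡ (x ⊡ y)) := by
        simp only [W.mul_assoc]
    _ = (y ⊡ yᵛ) ⊡ (((y ⊡ yᵛ) ⊡ xᵛ) ⊡ (x ⊡ y)) := by rw [W.ainvFu]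
    _ = ((y ⊡ yᵛ) ⊡ (y ⊡ yᵛ)) ⊡ (xᵛ ⊡ (x ⊡ y)) := by simp only [W.mul_assoc]
    _ = (y ⊡ yᵛ) ⊡ (xᵛ ⊡ (x ⊡ y)) := by rw [W.mfidem]
    _ = y ⊡ (yᵛ ⊡ (xᵛ ⊡ (x ⊡ y))) := W.mul_assoc _ _ _
    _ = xᵛ ⊡ (x ⊡ y) := W.tail x y
    _ = (xᵛ ⊡ x) ⊡ y := (W.mul_assoc _ _ _).symm

-- product of first components of r
lemma B2L (x y : S) :
    (x ⊡ (xᵛ ⊹ y)) ⊡ ((xᵛ ⊹ y)ᵛ ⊡ y) = x ⊡ y := by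
  have hΦp : (∼(x ⊡ y) ⊹ x ⊡ y) ⊹ (∼(x ⊡ y) ⊹ x ⊡ y) = ∼(x ⊡ y) ⊹ x ⊡ y := W.fidem _
  have ΦLval : ∼(x ⊡ (xᵛ ⊹ y)) ⊹ x ⊡ (xᵛ ⊹ y)
      = (∼x ⊹ x) ⊹ (∼(x ⊡ y) ⊹ x ⊡ y) := by
    rw [W.lam x y, W.fsum2, W.nn, W.cliff]
  calc (x ⊡ (xᵛ ⊹ y)) ⊡ ((xᵛ ⊹ y)ᵛ ⊡ y)
      = x ⊡ (((xᵛ ⊹ y) ⊡ (xᵛ ⊹ y)ᵛ) ⊡ y) := by simp only [W.mul_assoc]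
    _ = x ⊡ ((∼(xᵛ ⊹ y) ⊹ (xᵛ ⊹ y)) ⊡ y) := by rw [W.mul_inv_eq]
    _ = x ⊡ ((∼(xᵛ ⊹ y) ⊹ (xᵛ ⊹ y)) ⊹ y) := by rw [W.Mleft (W.fidem (xᵛ ⊹ y)) y]
    _ = (x ⊡ (∼(xᵛ ⊹ y) ⊹ (xᵛ ⊹ y)) ⊹ ∼x) ⊹ x ⊡ y := W.distrib _ _ _
    _ = ((x ⊹ (∼(x ⊡ (xᵛ ⊹ y)) ⊹ x ⊡ (xᵛ ⊹ y))) ⊹ ∼x) ⊹ x ⊡ y := by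
        rw [W.M10 x (xᵛ ⊹ y)]
    _ = ((x ⊹ ((∼x ⊹ x) ⊹ (∼(x ⊡ y) ⊹ x ⊡ y))) ⊹ ∼x) ⊹ x ⊡ y := by rw [ΦLval]
    _ = x ⊹ ((∼x ⊹ x) ⊹ ((∼(x ⊡ y) ⊹ x ⊡ y) ⊹ (∼x ⊹ x ⊡ y))) := by
        simp only [W.add_assoc]
    _ = x ⊹ ((∼x ⊹ x) ⊹ (((∼(x ⊡ y) ⊹ x ⊡ y) ⊹ ∼x) ⊹ x ⊡ y)) := by
        rw [W.add_assoc (∼(x ⊡ y) ⊹ x ⊡ y) (∼x) (x ⊡ y)]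
    _ = x ⊹ ((∼x ⊹ x) ⊹ ((∼x ⊹ (∼(x ⊡ y) ⊹ x ⊡ y)) ⊹ x ⊡ y)) := by
        rw [W.central hΦp (∼x)]
    _ = x ⊹ ((∼x ⊹ x) ⊹ (∼x ⊹ ((∼(x ⊡ y) ⊹ x ⊡ y) ⊹ x ⊡ y))) := by
        rw [W.add_assoc (∼x) (∼(x ⊡ y) ⊹ x ⊡ y) (x ⊡ y)]
    _ = x ⊹ ((∼x ⊹ x) ⊹ (∼x ⊹ x ⊡ y)) := by rw [W.fabs_l]
    _ = x ⊹ (((∼x ⊹ x) ⊹ ∼x) ⊹ x ⊡ y) := by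
        rw [← W.add_assoc (∼x ⊹ x) (∼x) (x ⊡ y)]
    _ = x ⊹ (∼x ⊹ x ⊡ y) := by rw [W.neg_add_neg]
    _ = x ⊡ y := W.M7 _ _

-- first component of rop ∘ r
lemma main3a (x y : S) :
    (x ⊡ (xᵛ ⊹ y)) ⊡ ((xᵛ ⊹ y)ᵛ ⊡ y) ⊹ ∼(x ⊡ (xᵛ ⊹ y)) = (x ⊡ y) ⊡ yᵛ := by
  rw [W.B2L, W.lam x y, W.nadd, W.nn, ← W.add_assoc, W.cliff, W.xyy]
  exact W.central (W.fidem (x ⊡ y)) x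

-- second component of rop ∘ r
lemma main3b (x y : S) :
    (((x ⊡ (xᵛ ⊹ y)) ⊡ ((xᵛ ⊹ y)ᵛ ⊡ y) ⊹ ∼(x ⊡ (xᵛ ⊹ y)))ᵛ ⊡ (x ⊡ (xᵛ ⊹ y)))
      ⊡ ((xᵛ ⊹ y)ᵛ ⊡ y) = (xᵛ ⊡ x) ⊡ y := by
  rw [W.mul_assoc, W.main3a x y, W.B2L, W.imul, W.imul, W.ii]
  calc (y ⊡ (yᵛ ⊡ xᵛ)) ⊡ (x ⊡ y)
      = y ⊡ (yᵛ ⊡ (xᵛ ⊡ (x ⊡ y))) := by simp only [W.mul_assoc]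
    _ = xᵛ ⊡ (x ⊡ y) := W.tail x y
    _ = (xᵛ ⊡ x) ⊡ y := (W.mul_assoc _ _ _).symm

lemma main1a (x y : S) :
    ((x ⊡ (xᵛ ⊹ y)) ⊡ ((xᵛ ⊹ y)ᵛ ⊡ y)) ⊡ ((xᵛ ⊹ y)ᵛ ⊡ y)ᵛ = x ⊡ (xᵛ ⊹ y) := by
  rw [W.xyy (x ⊡ (xᵛ ⊹ y)) ((xᵛ ⊹ y)ᵛ ⊡ y), W.B2L x y, W.lam x y,
    W.add_assoc, W.fabs_r]

lemma main1b (x y : S) :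
    ((x ⊡ (xᵛ ⊹ y))ᵛ ⊡ (x ⊡ (xᵛ ⊹ y))) ⊡ ((xᵛ ⊹ y)ᵛ ⊡ y) = (xᵛ ⊹ y)ᵛ ⊡ y := by
  have he : (xᵛ ⊡ x) ⊹ (xᵛ ⊡ x) = xᵛ ⊡ x := W.midem_aidem (W.meidem x)
  have hFd : (∼(xᵛ ⊹ y) ⊹ (xᵛ ⊹ y)) ⊹ (∼(xᵛ ⊹ y) ⊹ (xᵛ ⊹ y)) = ∼(xᵛ ⊹ y) ⊹ (xᵛ ⊹ y) :=
    W.fidem (xᵛ ⊹ y)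
  have Fd_val : ∼(xᵛ ⊹ y) ⊹ (xᵛ ⊹ y) = (xᵛ ⊡ x) ⊹ (∼y ⊹ y) := by
    rw [W.fsum2, W.eform]
  have eFd : (xᵛ ⊡ x) ⊡ (∼(xᵛ ⊹ y) ⊹ (xᵛ ⊹ y)) = ∼(xᵛ ⊹ y) ⊹ (xᵛ ⊹ y) := by
    rw [W.Q1 he hFd, Fd_val, ← W.add_assoc, he]
  have heL : ((x ⊡ (xᵛ ⊹ y))ᵛ ⊡ (x ⊡ (xᵛ ⊹ y))) ⊹ ((x ⊡ (xᵛ ⊹ y))ᵛ ⊡ (x ⊡ (xᵛ ⊹ y)))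
      = (x ⊡ (xᵛ ⊹ y))ᵛ ⊡ (x ⊡ (xᵛ ⊹ y)) := W.midem_aidem (W.meidem (x ⊡ (xᵛ ⊹ y)))
  have hΦR : (∼((xᵛ ⊹ y)ᵛ ⊡ y) ⊹ (xᵛ ⊹ y)ᵛ ⊡ y) ⊹ (∼((xᵛ ⊹ y)ᵛ ⊡ y) ⊹ (xᵛ ⊹ y)ᵛ ⊡ y)
      = ∼((xᵛ ⊹ y)ᵛ ⊡ y) ⊹ (xᵛ ⊹ y)ᵛ ⊡ y := W.fidem ((xᵛ ⊹ y)ᵛ ⊡ y)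
  have key : ((x ⊡ (xᵛ ⊹ y))ᵛ ⊡ (x ⊡ (xᵛ ⊹ y))) ⊹ (∼((xᵛ ⊹ y)ᵛ ⊡ y) ⊹ (xᵛ ⊹ y)ᵛ ⊡ y)
      = ∼((xᵛ ⊹ y)ᵛ ⊡ y) ⊹ (xᵛ ⊹ y)ᵛ ⊡ y := by
    rw [← W.Q1 heL hΦR, W.K1 ((xᵛ ⊹ y)ᵛ) y, W.ii, W.imul x (xᵛ ⊹ y)]
    calc ((xᵛ ⊹ y)ᵛ ⊡ xᵛ ⊡ (x ⊡ (xᵛ ⊹ y))) ⊡ ((xᵛ ⊹ y)ᵛ ⊡ ((∼y ⊹ y) ⊡ (xᵛ ⊹ y)))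
        = (xᵛ ⊹ y)ᵛ ⊡ (((xᵛ ⊡ x) ⊡ ((xᵛ ⊹ y) ⊡ (xᵛ ⊹ y)ᵛ)) ⊡ ((∼y ⊹ y) ⊡ (xᵛ ⊹ y))) := by
          simp only [W.mul_assoc]
      _ = (xᵛ ⊹ y)ᵛ ⊡ (((xᵛ ⊹ y) ⊡ (xᵛ ⊹ y)ᵛ) ⊡ ((∼y ⊹ y) ⊡ (xᵛ ⊹ y))) := by
          rw [W.mul_inv_eq (xᵛ ⊹ y), eFd]
      _ = ((xᵛ ⊹ y)ᵛ ⊡ ((xᵛ ⊹ y) ⊡ (xᵛ ⊹ y)ᵛ)) ⊡ ((∼y ⊹ y) ⊡ (xᵛ ⊹ y)) :=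
          (W.mul_assoc _ _ _).symm
      _ = (((xᵛ ⊹ y)ᵛ ⊡ (xᵛ ⊹ y)) ⊡ (xᵛ ⊹ y)ᵛ) ⊡ ((∼y ⊹ y) ⊡ (xᵛ ⊹ y)) := by
          rw [← W.mul_assoc ((xᵛ ⊹ y)ᵛ) (xᵛ ⊹ y) ((xᵛ ⊹ y)ᵛ)]
      _ = (xᵛ ⊹ y)ᵛ ⊡ ((∼y ⊹ y) ⊡ (xᵛ ⊹ y)) := by rw [W.inv_mul_inv]
  rw [W.exy (x ⊡ (xᵛ ⊹ y)) ((xᵛ ⊹ y)ᵛ ⊡ y)]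
  calc ((x ⊡ (xᵛ ⊹ y))ᵛ ⊡ (x ⊡ (xᵛ ⊹ y))) ⊹ (xᵛ ⊹ y)ᵛ ⊡ y
      = ((x ⊡ (xᵛ ⊹ y))ᵛ ⊡ (x ⊡ (xᵛ ⊹ y)))
          ⊹ ((∼((xᵛ ⊹ y)ᵛ ⊡ y) ⊹ (xᵛ ⊹ y)ᵛ ⊡ y) ⊹ (xᵛ ⊹ y)ᵛ ⊡ y) := by rw [W.fabs_l]
    _ = (((x ⊡ (xᵛ ⊹ y))ᵛ ⊡ (x ⊡ (xᵛ ⊹ y)))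
          ⊹ (∼((xᵛ ⊹ y)ᵛ ⊡ y) ⊹ (xᵛ ⊹ y)ᵛ ⊡ y)) ⊹ (xᵛ ⊹ y)ᵛ ⊡ y :=
        (W.add_assoc _ _ _).symm
    _ = (∼((xᵛ ⊹ y)ᵛ ⊡ y) ⊹ (xᵛ ⊹ y)ᵛ ⊡ y) ⊹ (xᵛ ⊹ y)ᵛ ⊡ y := by rw [key]
    _ = (xᵛ ⊹ y)ᵛ ⊡ y := W.fabs_l _

lemma main2a (x y : S) :
    ((x ⊡ y ⊹ ∼x) ⊡ (((x ⊡ y ⊹ ∼x)ᵛ ⊡ x) ⊡ y)) ⊡ (((x ⊡ y ⊹ ∼x)ᵛ ⊡ x) ⊡ y)ᵛ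
      = x ⊡ y ⊹ ∼x := by
  rw [W.xyy (x ⊡ y ⊹ ∼x) (((x ⊡ y ⊹ ∼x)ᵛ ⊡ x) ⊡ y), W.uvlem x y,
    W.fsum (W.fidem (x ⊡ y ⊹ ∼x)) (x ⊡ y), ← W.add_assoc, W.fabs_r]
  calc (x ⊡ y ⊹ ∼x) ⊹ (∼(x ⊡ y) ⊹ x ⊡ y)
      = x ⊡ y ⊹ (∼x ⊹ (∼(x ⊡ y) ⊹ x ⊡ y)) := by simp only [W.add_assoc]
    _ = x ⊡ y ⊹ ((∼(x ⊡ y) ⊹ x ⊡ y) ⊹ ∼x) := by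
        rw [← W.central (W.fidem (x ⊡ y)) (∼x)]
    _ = (x ⊡ y ⊹ (∼(x ⊡ y) ⊹ x ⊡ y)) ⊹ ∼x := (W.add_assoc _ _ _).symm
    _ = x ⊡ y ⊹ ∼x := by rw [W.fabs_r]

lemma main2b (x y : S) :
    ((x ⊡ y ⊹ ∼x)ᵛ ⊡ (x ⊡ y ⊹ ∼x)) ⊡ (((x ⊡ y ⊹ ∼x)ᵛ ⊡ x) ⊡ y)
      = ((x ⊡ y ⊹ ∼x)ᵛ ⊡ x) ⊡ y := by
  have hΦp : (∼(x ⊡ y) ⊹ x ⊡ y) ⊹ (∼(x ⊡ y) ⊹ x ⊡ y) = ∼(x ⊡ y) ⊹ x ⊡ y :=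
    W.fidem (x ⊡ y)
  have FuΦp : ((x ⊡ y ⊹ ∼x) ⊡ (x ⊡ y ⊹ ∼x)ᵛ) ⊡ (∼(x ⊡ y) ⊹ x ⊡ y)
      = (x ⊡ y ⊹ ∼x) ⊡ (x ⊡ y ⊹ ∼x)ᵛ := by
    rw [W.mul_inv_eq (x ⊡ y ⊹ ∼x), W.Q1 (W.fidem (x ⊡ y ⊹ ∼x)) hΦp]
    have Fu_val : ∼(x ⊡ y ⊹ ∼x) ⊹ (x ⊡ y ⊹ ∼x)
        = (∼(x ⊡ y) ⊹ x ⊡ y) ⊹ (∼x ⊹ x) := by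
      rw [W.fsum2, W.nn, W.cliff]
    rw [Fu_val]
    calc ((∼(x ⊡ y) ⊹ x ⊡ y) ⊹ (∼x ⊹ x)) ⊹ (∼(x ⊡ y) ⊹ x ⊡ y)
        = (∼(x ⊡ y) ⊹ x ⊡ y) ⊹ ((∼(x ⊡ y) ⊹ x ⊡ y) ⊹ (∼x ⊹ x)) := by
          rw [← W.central hΦp ((∼(x ⊡ y) ⊹ x ⊡ y) ⊹ (∼x ⊹ x))]
      _ = ((∼(x ⊡ y) ⊹ x ⊡ y) ⊹ (∼(x ⊡ y) ⊹ x ⊡ y)) ⊹ (∼x ⊹ x) :=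
          (W.add_assoc _ _ _).symm
      _ = (∼(x ⊡ y) ⊹ x ⊡ y) ⊹ (∼x ⊹ x) := by rw [hΦp]
  have e_u_eq : (x ⊡ y ⊹ ∼x)ᵛ ⊡ (x ⊡ y ⊹ ∼x)
      = ∼(((x ⊡ y ⊹ ∼x)ᵛ ⊡ x) ⊡ y) ⊹ ((x ⊡ y ⊹ ∼x)ᵛ ⊡ x) ⊡ y := by
    rw [W.mul_assoc ((x ⊡ y ⊹ ∼x)ᵛ) x y, W.K1 ((x ⊡ y ⊹ ∼x)ᵛ) (x ⊡ y), W.ii]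
    calc (x ⊡ y ⊹ ∼x)ᵛ ⊡ (x ⊡ y ⊹ ∼x)
        = (x ⊡ y ⊹ ∼x)ᵛ ⊡ (((x ⊡ y ⊹ ∼x) ⊡ (x ⊡ y ⊹ ∼x)ᵛ) ⊡ (x ⊡ y ⊹ ∼x)) := by
          rw [W.mul_inv_mul (x ⊡ y ⊹ ∼x)]
      _ = (x ⊡ y ⊹ ∼x)ᵛ ⊡ ((((x ⊡ y ⊹ ∼x) ⊡ (x ⊡ y ⊹ ∼x)ᵛ)
            ⊡ (∼(x ⊡ y) ⊹ x ⊡ y)) ⊡ (x ⊡ y ⊹ ∼x)) := by rw [FuΦp]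
      _ = (((x ⊡ y ⊹ ∼x)ᵛ ⊡ (x ⊡ y ⊹ ∼x)) ⊡ (x ⊡ y ⊹ ∼x)ᵛ)
            ⊡ ((∼(x ⊡ y) ⊹ x ⊡ y) ⊡ (x ⊡ y ⊹ ∼x)) := by simp only [W.mul_assoc]
      _ = (x ⊡ y ⊹ ∼x)ᵛ ⊡ ((∼(x ⊡ y) ⊹ x ⊡ y) ⊡ (x ⊡ y ⊹ ∼x)) := by
          rw [W.inv_mul_inv]
  rw [W.exy (x ⊡ y ⊹ ∼x) (((x ⊡ y ⊹ ∼x)ᵛ ⊡ x) ⊡ y), e_u_eq, W.fabs_l]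

end Core
end WeakBrace


theorem weakBrace_r_completely_regular {S : Type*} (W : WeakBrace S) :
    let r : S × S → S × S := fun p =>
      (W.mul p.1 (W.add (W.inv p.1) p.2), W.mul (W.inv (W.add (W.inv p.1) p.2)) p.2)
    let rop : S × S → S × S := fun p =>
      (W.add (W.mul p.1 p.2) (W.neg p.1),
       W.mul (W.mul (W.inv (W.add (W.mul p.1 p.2) (W.neg p.1))) p.1) p.2)
    r ∘ rop ∘ r = r ∧ rop ∘ r ∘ rop = rop ∧ r ∘ rop = rop ∘ r ∧
      ∀ a b : S, (r ∘ rop) (a, b)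
        = (W.mul (W.mul a b) (W.inv b), W.mul (W.mul (W.inv a) a) b) := by
  intro r rop
  have hr4 : ∀ x y : S, r (rop (x, y))
      = (W.mul (W.mul x y) (W.inv y), W.mul (W.mul (W.inv x) x) y) :=
    fun x y => Prod.ext (W.main4a x y) (W.main4b x y)
  have hr3 : ∀ x y : S, rop (r (x, y))
      = (W.mul (W.mul x y) (W.inv y), W.mul (W.mul (W.inv x) x) y) :=
    fun x y => Prod.ext (W.main3a x y) (W.main3b x y)
  refine ⟨?_, ?_, ?_, ?_⟩
  · funext p
    exact (hr4 (W.mul p.1 (W.add (W.inv p.1) p.2))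
        (W.mul (W.inv (W.add (W.inv p.1) p.2)) p.2)).trans
      (Prod.ext (W.main1a p.1 p.2) (W.main1b p.1 p.2))
  · funext p
    exact (hr3 (W.add (W.mul p.1 p.2) (W.neg p.1))
        (W.mul (W.mul (W.inv (W.add (W.mul p.1 p.2) (W.neg p.1))) p.1) p.2)).trans
      (Prod.ext (W.main2a p.1 p.2) (W.main2b p.1 p.2))
  · funext p
    exact (hr4 p.1 p.2).trans (hr3 p.1 p.2).symm
  · intro a b
    exact hr4 a b
end

section
/- Let (S,∘) be an inverse semigroup. Then the map s : S×S → S×S given by s(a,b) = (a∘b∘b⁻, a⁻∘a∘b) is an idempotent set-theoretic solution of the Yang-Baxter equation (s² = s). -/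
set_option linter.unusedSectionVars false

namespace ISAux
variable {S : Type*} [Semigroup S] (inv : S → S)

section
variable
  (mim : ∀ a : S, a * inv a * a = a)
  (imi : ∀ a : S, inv a * a * inv a = inv a)
  (iu : ∀ a x : S, a * x * a = a → x * a * x = x → x = inv a)

include mim imi iu

theorem inv_inv (a : S) : inv (inv a) = a := (iu (inv a) a (imi a) (mim a)).symm

theorem mim_c (a x : S) : a * (inv a * (a * x)) = a * x := by
  simpa only [mul_assoc] using congrArg (· * x) (mim a)

theorem imi_c (a x : S) : inv a * (a * (inv a * x)) = inv a * x := by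
  simpa only [mul_assoc] using congrArg (· * x) (imi a)

theorem mim' (a : S) : a * (inv a * a) = a := by rw [← mul_assoc]; exact mim a

theorem imi' (a : S) : inv a * (a * inv a) = inv a := by rw [← mul_assoc]; exact imi a

theorem idE (a : S) : (inv a * a) * (inv a * a) = inv a * a := by
  rw [mul_assoc, imi_c inv mim imi iu]

theorem idF (a : S) : (a * inv a) * (a * inv a) = a * inv a := by
  rw [mul_assoc, mim_c inv mim imi iu]

theorem idem_inv {e : S} (he : e * e = e) : inv e = e := by
  refine (iu e e ?_ ?_).symm <;> rw [he, he]

theorem idem_mul {e f : S} (he : e * e = e) (hf : f * f = f) :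
    (e * f) * (e * f) = e * f := by
  set w := inv (e * f) with hw
  have h1 : (e * f) * w * (e * f) = e * f := mim (e * f)
  have h2 : w * (e * f) * w = w := imi (e * f)
  have h2c : ∀ x : S, w * (e * (f * (w * x))) = w * x := fun x => by
    simpa only [mul_assoc] using congrArg (· * x) h2
  have hec : ∀ x : S, e * (e * x) = e * x := fun x => by
    simpa only [mul_assoc] using congrArg (· * x) he
  have hfc : ∀ x : S, f * (f * x) = f * x := fun x => by
    simpa only [mul_assoc] using congrArg (· * x) hf
  have hfwe : (f * w) * e = w := by
    refine iu (e * f) ((f * w) * e) ?_ ?_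
    · calc (e * f) * ((f * w) * e) * (e * f)
          = e * (f * (f * (w * (e * (e * f))))) := by simp only [mul_assoc]
        _ = e * (f * (w * (e * f))) := by rw [hfc, hec]
        _ = (e * f) * w * (e * f) := by simp only [mul_assoc]
        _ = e * f := h1
    · calc ((f * w) * e) * (e * f) * ((f * w) * e)
          = f * (w * (e * (e * (f * (f * (w * e)))))) := by simp only [mul_assoc]
        _ = f * (w * (e * (f * (w * e)))) := by rw [hec, hfc]
        _ = f * (w * e) := by rw [h2c]
        _ = (f * w) * e := by rw [mul_assoc]
  have hwid : w * w = w := by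
    conv_lhs => rw [← hfwe]
    calc ((f * w) * e) * ((f * w) * e)
        = f * (w * (e * (f * (w * e)))) := by simp only [mul_assoc]
      _ = f * (w * e) := by rw [h2c]
      _ = (f * w) * e := by rw [mul_assoc]
      _ = w := hfwe
  calc (e * f) * (e * f) = inv w * inv w := by
        rw [hw, inv_inv inv mim imi iu]
    _ = w * w := by rw [idem_inv inv mim imi iu hwid]
    _ = w := hwid
    _ = inv w := (idem_inv inv mim imi iu hwid).symm
    _ = e * f := by rw [hw, inv_inv inv mim imi iu]

theorem idem_comm {e f : S} (he : e * e = e) (hf : f * f = f) : e * f = f * e := by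
  have hef := idem_mul inv mim imi iu he hf
  have hfe := idem_mul inv mim imi iu hf he
  have h : f * e = inv (e * f) := by
    refine iu (e * f) (f * e) ?_ ?_
    · calc (e * f) * (f * e) * (e * f)
          = e * (f * (f * (e * (e * f)))) := by simp only [mul_assoc]
        _ = e * (f * (e * (e * f))) := by
            rw [show f * (f * (e * (e*f))) = (f*f) * (e * (e*f)) by rw [mul_assoc], hf]
        _ = e * (f * (e * f)) := by
            rw [show e * (e * f) = (e*e) * f by rw [mul_assoc], he]
        _ = (e * f) * (e * f) := by simp only [mul_assoc]
        _ = e * f := hef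
    · calc (f * e) * (e * f) * (f * e)
          = f * (e * (e * (f * (f * e)))) := by simp only [mul_assoc]
        _ = f * (e * (f * (f * e))) := by
            rw [show e * (e * (f * (f*e))) = (e*e) * (f * (f*e)) by rw [mul_assoc], he]
        _ = f * (e * (f * e)) := by
            rw [show f * (f * e) = (f*f) * e by rw [mul_assoc], hf]
        _ = (f * e) * (f * e) := by simp only [mul_assoc]
        _ = f * e := hfe
  rw [h, idem_inv inv mim imi iu hef]

theorem comm_c {e f : S} (he : e * e = e) (hf : f * f = f) (x : S) :
    e * (f * x) = f * (e * x) := by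
  rw [← mul_assoc, idem_comm inv mim imi iu he hf, mul_assoc]

theorem mir (a b : S) : inv (a * b) = inv b * inv a := by
  have K : ∀ y : S, b * (inv b * (inv a * (a * y))) = inv a * (a * (b * (inv b * y))) := by
    intro y
    have h := comm_c inv mim imi iu (idF inv mim imi iu b) (idE inv mim imi iu a) y
    simpa only [mul_assoc] using h
  refine (iu (a * b) (inv b * inv a) ?_ ?_).symm
  · calc (a * b) * (inv b * inv a) * (a * b)
        = a * (b * (inv b * (inv a * (a * b)))) := by simp only [mul_assoc]
      _ = a * (inv a * (a * (b * (inv b * b)))) := by rw [K]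
      _ = a * (inv a * (a * b)) := by rw [mim' inv mim imi iu b]
      _ = a * b := mim_c inv mim imi iu a b
  · calc (inv b * inv a) * (a * b) * (inv b * inv a)
        = inv b * (inv a * (a * (b * (inv b * inv a)))) := by simp only [mul_assoc]
      _ = inv b * (b * (inv b * (inv a * (a * inv a)))) := by rw [← K]
      _ = inv b * (b * (inv b * inv a)) := by rw [imi' inv mim imi iu a]
      _ = inv b * inv a := imi_c inv mim imi iu b (inv a)

theorem idem_conj {e : S} (he : e * e = e) (b : S) :
    (inv b * (e * b)) * (inv b * (e * b)) = inv b * (e * b) := by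
  have hec : ∀ x : S, e * (e * x) = e * x := fun x => by
    simpa only [mul_assoc] using congrArg (· * x) he
  have K : ∀ y : S, e * (b * (inv b * y)) = b * (inv b * (e * y)) := by
    intro y
    have h := comm_c inv mim imi iu he (idF inv mim imi iu b) y
    simpa only [mul_assoc] using h
  calc (inv b * (e * b)) * (inv b * (e * b))
      = inv b * (e * (b * (inv b * (e * b)))) := by simp only [mul_assoc]
    _ = inv b * (b * (inv b * (e * (e * b)))) := by rw [K]
    _ = inv b * (b * (inv b * (e * b))) := by rw [hec]
    _ = inv b * (e * b) := imi_c inv mim imi iu b (e * b)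

theorem idem_conj' {e : S} (he : e * e = e) (b : S) :
    (b * (e * inv b)) * (b * (e * inv b)) = b * (e * inv b) := by
  have hec : ∀ x : S, e * (e * x) = e * x := fun x => by
    simpa only [mul_assoc] using congrArg (· * x) he
  have K : ∀ y : S, e * (inv b * (b * y)) = inv b * (b * (e * y)) := by
    intro y
    have h := comm_c inv mim imi iu he (idE inv mim imi iu b) y
    simpa only [mul_assoc] using h
  calc (b * (e * inv b)) * (b * (e * inv b))
      = b * (e * (inv b * (b * (e * inv b)))) := by simp only [mul_assoc]
    _ = b * (inv b * (b * (e * (e * inv b)))) := by rw [K]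
    _ = b * (inv b * (b * (e * inv b))) := by rw [hec]
    _ = b * (e * inv b) := mim_c inv mim imi iu b (e * inv b)

theorem C1 (a b : S) :
    (a * b * inv b) * (inv a * a * b) * inv (inv a * a * b) = a * b * inv b := by
  have hK : ∀ y : S, inv a * (a * (b * (inv b * y))) = b * (inv b * (inv a * (a * y))) := by
    intro y
    have h := comm_c inv mim imi iu (idE inv mim imi iu a) (idF inv mim imi iu b) y
    simpa only [mul_assoc] using h
  have h2 := congrArg (a * ·) (idem_comm inv mim imi iu (idF inv mim imi iu b) (idE inv mim imi iu a))
  simp only [mul_assoc] at h2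
  simp only [mir inv mim imi iu, inv_inv inv mim imi iu, mul_assoc]
  rw [hK (inv a * a), imi_c inv mim imi iu a a, mim_c inv mim imi iu b (inv b * (inv a * a)),
    h2, mim_c inv mim imi iu a (b * inv b)]

theorem C2 (a b : S) :
    inv (a * b * inv b) * (a * b * inv b) * (inv a * a * b) = inv a * a * b := by
  have hK : ∀ y : S, inv a * (a * (b * (inv b * y))) = b * (inv b * (inv a * (a * y))) := by
    intro y
    have h := comm_c inv mim imi iu (idE inv mim imi iu a) (idF inv mim imi iu b) y
    simpa only [mul_assoc] using h
  simp only [mir inv mim imi iu, inv_inv inv mim imi iu, mul_assoc]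
  rw [hK (inv a * (a * b)), imi_c inv mim imi iu a (a * b),
    mim_c inv mim imi iu b (inv b * (inv a * (a * b))), ← hK b, mim' inv mim imi iu b]

theorem B1 (a b c : S) :
    (a * b * inv b) * ((inv a * a * b) * c * inv c) * inv ((inv a * a * b) * c * inv c)
      = a * (b * c * inv c) * inv (b * c * inv c) := by
  have hg := idem_conj' inv mim imi iu (idF inv mim imi iu c) b
  have hKg : ∀ y : S, inv a * (a * (b * (c * (inv c * (inv b * y)))))
      = b * (c * (inv c * (inv b * (inv a * (a * y))))) := by
    intro y
    have h := comm_c inv mim imi iu (idE inv mim imi iu a) hg y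
    simpa only [mul_assoc] using h
  have h2 := congrArg (a * ·) (idem_comm inv mim imi iu hg (idE inv mim imi iu a))
  simp only [mul_assoc] at h2
  simp only [mir inv mim imi iu, inv_inv inv mim imi iu, mul_assoc]
  rw [mim_c inv mim imi iu c (inv c * (inv b * (inv a * a))), hKg (inv a * a),
    imi_c inv mim imi iu a a, mim_c inv mim imi iu b (c * (inv c * (inv b * (inv a * a)))),
    h2, mim_c inv mim imi iu a (b * (c * (inv c * inv b))),
    mim_c inv mim imi iu c (inv c * inv b)]

theorem B2 (a b c : S) :
    inv (a * b * inv b) * (a * b * inv b) * ((inv a * a * b) * c * inv c)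
      = (inv a * a * (b * c * inv c)) * (inv b * b * c) * inv (inv b * b * c) := by
  have hK : ∀ y : S, inv a * (a * (b * (inv b * y))) = b * (inv b * (inv a * (a * y))) := by
    intro y
    have h := comm_c inv mim imi iu (idE inv mim imi iu a) (idF inv mim imi iu b) y
    simpa only [mul_assoc] using h
  have hK2 : ∀ y : S, c * (inv c * (inv b * (b * y))) = inv b * (b * (c * (inv c * y))) := by
    intro y
    have h := comm_c inv mim imi iu (idF inv mim imi iu c) (idE inv mim imi iu b) y
    simpa only [mul_assoc] using h
  have h3 := congrArg (b * ·) (idem_comm inv mim imi iu (idF inv mim imi iu c) (idE inv mim imi iu b))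
  simp only [mul_assoc] at h3
  simp only [mir inv mim imi iu, inv_inv inv mim imi iu, mul_assoc]
  rw [hK (inv a * (a * (b * (c * inv c)))), imi_c inv mim imi iu a (a * (b * (c * inv c))),
    mim_c inv mim imi iu b (inv b * (inv a * (a * (b * (c * inv c))))),
    ← hK (b * (c * inv c)), mim_c inv mim imi iu b (c * inv c),
    hK2 (c * (inv c * (inv b * b))), mim_c inv mim imi iu c (inv c * (inv b * b)),
    mim_c inv mim imi iu b (c * (inv c * (inv b * b))), h3, mim_c inv mim imi iu b (c * inv c)]

theorem B3 (a b c : S) :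
    inv (inv a * a * b) * (inv a * a * b) * c
      = inv (inv a * a * (b * c * inv c)) * (inv a * a * (b * c * inv c)) * (inv b * b * c) := by
  have hh := idem_conj inv mim imi iu (idE inv mim imi iu a) b
  have hK2 : ∀ y : S, c * (inv c * (inv b * (b * y))) = inv b * (b * (c * (inv c * y))) := by
    intro y
    have h := comm_c inv mim imi iu (idF inv mim imi iu c) (idE inv mim imi iu b) y
    simpa only [mul_assoc] using h
  have hKh : ∀ y : S, c * (inv c * (inv b * (inv a * (a * (b * y)))))
      = inv b * (inv a * (a * (b * (c * (inv c * y))))) := by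
    intro y
    have h := comm_c inv mim imi iu (idF inv mim imi iu c) hh y
    simpa only [mul_assoc] using h
  simp only [mir inv mim imi iu, inv_inv inv mim imi iu, mul_assoc]
  rw [imi_c inv mim imi iu a (a * (b * c)),
    imi_c inv mim imi iu a (a * (b * (c * (inv c * (inv b * (b * c)))))),
    hK2 c, mim' inv mim imi iu c, mim_c inv mim imi iu b c,
    hKh c, mim' inv mim imi iu c]

end
end ISAux

theorem inverseSemigroup_idempotent_solution {S : Type*} (mul : S → S → S) (inv : S → S)
    (mul_assoc : ∀ a b c : S, mul (mul a b) c = mul a (mul b c))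
    (mul_inv_mul : ∀ a : S, mul (mul a (inv a)) a = a)
    (inv_mul_inv : ∀ a : S, mul (mul (inv a) a) (inv a) = inv a)
    (inv_unique : ∀ a x : S, mul (mul a x) a = a → mul (mul x a) x = x → x = inv a) :
    let s : S × S → S × S := fun p =>
      (mul (mul p.1 p.2) (inv p.2), mul (mul (inv p.1) p.1) p.2)
    let s12 : S × S × S → S × S × S := fun p =>
      ((s (p.1, p.2.1)).1, (s (p.1, p.2.1)).2, p.2.2)
    let s23 : S × S × S → S × S × S := fun p => (p.1, s p.2)
    s12 ∘ s23 ∘ s12 = s23 ∘ s12 ∘ s23 ∧ s ∘ s = s := by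
  letI : Mul S := ⟨mul⟩
  letI : Semigroup S := ⟨mul_assoc⟩
  intro s s12 s23
  constructor
  · funext p
    obtain ⟨a, b, c⟩ := p
    refine Prod.ext ?_ (Prod.ext ?_ ?_)
    · exact ISAux.B1 inv mul_inv_mul inv_mul_inv inv_unique a b c
    · exact ISAux.B2 inv mul_inv_mul inv_mul_inv inv_unique a b c
    · exact ISAux.B3 inv mul_inv_mul inv_mul_inv inv_unique a b c
  · funext p
    obtain ⟨a, b⟩ := p
    refine Prod.ext ?_ ?_
    · exact ISAux.C1 inv mul_inv_mul inv_mul_inv inv_unique a b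
    · exact ISAux.C2 inv mul_inv_mul inv_mul_inv inv_unique a b
end
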